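/- arXiv:0903.4628 — 4 statements merged into one kernel-verified Lean document; each statement's English description precedes it below -/
import Mathlib

section
/- The number of Gelfand–Tsetlin patterns with n rows and bottom row (k_1,…,k_n), i.e. triangular arrays (a_{i,j})_{1≤i≤j≤n} of integers with a_{i,j} ≤ a_{i-1,j} ≤ a_{i,j+1} for all valid indices and a_{1,j}=k_j, equals ∏_{1≤i<j≤n} (k_j - k_i + j - i)/(j - i), for any weakly increasing integer sequence k_1 ≤ k_2 ≤ … ≤ k_n. -/
/-- A Gelfand–Tsetlin pattern with n rows, encoded 0-based: row i (i = 0 is the bottom row)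
consists of the entries `a i j` with i ≤ j ≤ n-1.  Each entry is weakly between its
southwest and southeast neighbours: a i (j-1) ≤ a (i+1) j ≤ a i j.  Entries outside the
triangular array are normalized to 0. -/
def IsGTPattern (n : ℕ) (k : Fin n → ℤ) (a : ℕ → ℕ → ℤ) : Prop :=
  (∀ i j : ℕ, ¬(i ≤ j ∧ j < n) → a i j = 0) ∧
  (∀ j : Fin n, a 0 (j : ℕ) = k j) ∧
  (∀ i j : ℕ, i + 1 ≤ j → j ≤ n - 1 → a i (j - 1) ≤ a (i + 1) j ∧ a (i + 1) j ≤ a i j)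


namespace GTProof
open Finset Polynomial Matrix


noncomputable def desc (i : ℕ) (x : ℤ) : ℚ := (descPochhammer ℚ i).eval (x : ℚ)

lemma desc_zero (x : ℤ) : desc 0 x = 1 := by simp [desc]

lemma desc_pascal (i : ℕ) (x : ℤ) :
    desc (i+1) (x+1) - desc (i+1) x = ((i : ℚ)+1) * desc i x := by
  have h1 : desc (i+1) (x+1) = ((x:ℚ)+1) * desc i x := by
    unfold desc
    rw [descPochhammer_succ_left]
    push_cast
    simp [eval_comp]
  have h2 : desc (i+1) x = desc i x * ((x:ℚ) - i) := by
    unfold desc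
    rw [descPochhammer_succ_eval]
  rw [h1, h2]; ring

lemma desc_hockey (i : ℕ) {a b : ℤ} (h : a ≤ b) :
    ((i : ℚ)+1) * ∑ x ∈ Finset.Ioc a b, desc i x
      = desc (i+1) (b+1) - desc (i+1) (a+1) := by
  obtain ⟨N, rfl⟩ : ∃ N : ℕ, b = a + N := ⟨(b - a).toNat, by omega⟩
  clear h
  induction N with
  | zero => simp
  | succ N ih =>
      have hIoc : Finset.Ioc a (a + (N+1:ℕ)) = insert (a+N+1) (Finset.Ioc a (a+N)) := by
        ext t; simp only [Finset.mem_Ioc, Finset.mem_insert]; omega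
      rw [hIoc, Finset.sum_insert (by simp), mul_add]
      push_cast at ih ⊢
      have := desc_pascal i (a+N+1)
      have e1 : a + N + 1 + 1 = a + (N+1) + 1 := by ring
      rw [e1] at this
      linarith [this, ih]

/-- the Vandermonde-type product. -/
noncomputable def Dl {N : ℕ} (x : Fin N → ℤ) : ℚ :=
  ∏ i : Fin N, ∏ j ∈ Finset.Ioi i, ((x j : ℚ) - (x i : ℚ))

lemma det_desc {N : ℕ} (x : Fin N → ℤ) :
    (Matrix.of fun i j : Fin N => desc (j : ℕ) (x i)).det = Dl x := by
  unfold desc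
  rw [← Matrix.det_eval_matrixOfPolynomials_eq_det_vandermonde (fun i => ((x i : ℚ)))
      (fun i => descPochhammer ℚ i)
      (fun i => descPochhammer_natDegree ℚ i)
      (fun i => monic_descPochhammer ℚ i)]
  rw [Matrix.det_vandermonde]
  rfl

lemma det_desc' {N : ℕ} (x : Fin N → ℤ) :
    (Matrix.of fun i j : Fin N => desc (i : ℕ) (x j)).det = Dl x := by
  rw [← det_desc x, ← Matrix.det_transpose]
  rfl




noncomputable def Emat {n : ℕ} (l : Fin (n+1) → ℤ) : Matrix (Fin (n+1)) (Fin (n+1)) ℚ :=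
  Matrix.of fun i j => Fin.cases (desc (i:ℕ) (l 0 + 1))
    (fun j' : Fin n => desc (i:ℕ) (l j'.succ + 1) - desc (i:ℕ) (l j'.castSucc + 1)) j

def Umat (n : ℕ) : Matrix (Fin (n+1)) (Fin (n+1)) ℚ :=
  Matrix.of fun t j => if t ≤ j then 1 else 0

lemma det_Umat (n : ℕ) : (Umat n).det = 1 := by
  rw [Matrix.det_of_upperTriangular (by
    intro i j hij
    simp only [Umat, Matrix.of_apply, ite_eq_right_iff]
    intro h; exact absurd h (not_le.mpr hij))]
  simp [Umat]

lemma sum_Iic_Emat {n : ℕ} (l : Fin (n+1) → ℤ) (i : Fin (n+1)) (j : Fin (n+1)) :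
    ∑ t ∈ Finset.Iic j, Emat l i t = desc (i:ℕ) (l j + 1) := by
  induction j using Fin.induction with
  | zero =>
      have h0 : (Finset.Iic (0 : Fin (n+1))) = {0} := by
        ext t; simp [Fin.le_zero_iff]
      rw [h0]; simp [Emat]
  | succ j ih =>
      have hins : Finset.Iic j.succ = insert j.succ (Finset.Iic j.castSucc) := by
        ext t
        simp only [Finset.mem_Iic, Finset.mem_insert, Fin.le_def, Fin.ext_iff,
          Fin.val_succ, Fin.coe_castSucc]
        omega
      have hnm : j.succ ∉ Finset.Iic j.castSucc := by
        simp only [Finset.mem_Iic, Fin.le_def, Fin.val_succ, Fin.coe_castSucc]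
        omega
      rw [hins, Finset.sum_insert hnm, ih]
      have : Emat l i j.succ
          = desc (i:ℕ) (l j.succ + 1) - desc (i:ℕ) (l j.castSucc + 1) := by
        simp [Emat]
      rw [this]; ring

lemma M_eq_EU {n : ℕ} (l : Fin (n+1) → ℤ) :
    (Matrix.of fun i j : Fin (n+1) => desc (i:ℕ) (l j + 1)) = Emat l * Umat n := by
  ext i j
  rw [Matrix.mul_apply]
  have : ∀ t : Fin (n+1), Emat l i t * Umat n t j
      = if t ∈ Finset.Iic j then Emat l i t else 0 := by
    intro t
    simp only [Umat, Matrix.of_apply, Finset.mem_Iic]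
    split <;> simp_all
  rw [Finset.sum_congr rfl (fun t _ => this t), Finset.sum_ite_mem,
    Finset.univ_inter, sum_Iic_Emat]
  rfl

lemma det_Emat {n : ℕ} (l : Fin (n+1) → ℤ) :
    (Emat l).det =
      (Matrix.of fun i j : Fin n =>
        desc ((i:ℕ)+1) (l j.succ + 1) - desc ((i:ℕ)+1) (l j.castSucc + 1)).det := by
  rw [Matrix.det_succ_row_zero]
  rw [Finset.sum_eq_single (0 : Fin (n+1))]
  · have h00 : Emat l 0 0 = 1 := by simp [Emat, desc_zero]
    rw [h00]
    simp only [Fin.val_zero, pow_zero, one_mul]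
    have hsub : (Emat l).submatrix Fin.succ (Fin.succAbove 0)
        = Matrix.of (fun i j : Fin n =>
            desc ((i:ℕ)+1) (l j.succ + 1) - desc ((i:ℕ)+1) (l j.castSucc + 1)) := by
      ext i j
      simp [Emat, Fin.succAbove_zero]
    rw [hsub]
  · intro b _ hb
    obtain ⟨j', rfl⟩ := Fin.eq_succ_of_ne_zero hb
    have : Emat l 0 j'.succ = 0 := by
      simp [Emat, desc_zero]
    rw [this]; ring
  · intro h; exact absurd (Finset.mem_univ _) h

lemma fact_prod (n : ℕ) : (∏ i : Fin n, ((i:ℚ)+1)) = (n.factorial : ℚ) := by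
  rw [Fin.prod_univ_eq_prod_range (fun i => ((i:ℚ)+1)) n]
  rw [← Finset.prod_range_add_one_eq_factorial n]
  push_cast
  rfl

lemma key {n : ℕ} (l : Fin (n+1) → ℤ) (hl : Monotone l) :
    (n.factorial : ℚ) *
      ∑ μ ∈ Fintype.piFinset (fun j : Fin n => Finset.Ioc (l j.castSucc) (l j.succ)),
        Dl μ = Dl l := by
  classical
  set A : Fin n → Finset ℤ := fun j => Finset.Ioc (l j.castSucc) (l j.succ) with hA
  -- Step 1: Dl l = det M
  have h1 : Dl l = (Matrix.of fun i j : Fin (n+1) => desc (i:ℕ) (l j + 1)).det := by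
    rw [det_desc' (fun j => l j + 1)]
    unfold Dl
    refine Finset.prod_congr rfl fun i _ => Finset.prod_congr rfl fun j _ => ?_
    push_cast; ring
  -- Step 2: det M = det E
  have h2 : (Matrix.of fun i j : Fin (n+1) => desc (i:ℕ) (l j + 1)).det = (Emat l).det := by
    rw [M_eq_EU l, Matrix.det_mul, det_Umat, mul_one]
  -- Step 4: row scaling
  set B : Matrix (Fin n) (Fin n) ℚ :=
    Matrix.of (fun i j : Fin n => ∑ x ∈ A j, desc (i:ℕ) x) with hB
  have h4 : (Matrix.of fun i j : Fin n =>
        desc ((i:ℕ)+1) (l j.succ + 1) - desc ((i:ℕ)+1) (l j.castSucc + 1)).det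
      = (n.factorial : ℚ) * B.det := by
    have hD : (Matrix.of fun i j : Fin n =>
        desc ((i:ℕ)+1) (l j.succ + 1) - desc ((i:ℕ)+1) (l j.castSucc + 1))
        = Matrix.of (fun i j : Fin n => ((i:ℚ)+1) * B i j) := by
      ext i j
      simp only [Matrix.of_apply, hB]
      rw [← desc_hockey (i:ℕ) (hl (Fin.castSucc_le_succ j))]
    rw [hD, Matrix.det_mul_column, fact_prod]
  -- Step 5: multilinearity
  have h5 : B.det = ∑ μ ∈ Fintype.piFinset A, Dl μ := by
    rw [← Matrix.det_transpose B]
    have hdet : ∀ M : Matrix (Fin n) (Fin n) ℚ, M.det = Matrix.detRowAlternating M :=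
      fun _ => rfl
    rw [hdet]
    have hrow : (Bᵀ : Matrix (Fin n) (Fin n) ℚ)
        = fun j => ∑ x ∈ A j, (fun i : Fin n => desc (i:ℕ) x) := by
      ext j i
      simp only [Matrix.transpose_apply, hB, Matrix.of_apply, Finset.sum_apply]
    rw [hrow]
    have key5 := (Matrix.detRowAlternating :
        AlternatingMap ℚ (Fin n → ℚ) ℚ (Fin n)).toMultilinearMap.map_sum_finset
      (fun j (x : ℤ) => (fun i : Fin n => desc (i:ℕ) x)) A
    simp only [AlternatingMap.coe_multilinearMap] at key5
    rw [key5]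
    refine Finset.sum_congr rfl fun μ hμ => ?_
    have : (Matrix.detRowAlternating
        (fun j : Fin n => fun i : Fin n => desc (i:ℕ) (μ j)) : ℚ)
        = ((Matrix.of fun i j : Fin n => desc (i:ℕ) (μ j))ᵀ).det := rfl
    rw [this, Matrix.det_transpose, det_desc']
  rw [h1, h2, det_Emat, h4, h5]



noncomputable def box {n : ℕ} (k : Fin (n+1) → ℤ) : Finset (Fin n → ℤ) :=
  Fintype.piFinset (fun j => Finset.Icc (k j.castSucc) (k j.succ))

def glue {n : ℕ} (k : Fin (n+1) → ℤ) (b : ℕ → ℕ → ℤ) : ℕ → ℕ → ℤ :=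
  fun i j =>
    if i = 0 then (if h : j < n + 1 then k ⟨j, h⟩ else 0)
    else (if j = 0 then 0 else b (i-1) (j-1))

lemma body_mem {n : ℕ} {k : Fin (n+1) → ℤ} {a : ℕ → ℕ → ℤ}
    (ha : IsGTPattern (n+1) k a) :
    (fun j : Fin n => a 1 ((j:ℕ)+1)) ∈ box k := by
  obtain ⟨h0, hrow, hineq⟩ := ha
  rw [box, Fintype.mem_piFinset]
  intro j
  rw [Finset.mem_Icc]
  have h := hineq 0 ((j:ℕ)+1) (by omega) (by simp)
  simp only [Nat.add_sub_cancel] at h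
  have e1 : a 0 (j:ℕ) = k j.castSucc := by
    have := hrow j.castSucc; simpa using this
  have e2 : a 0 ((j:ℕ)+1) = k j.succ := by
    have := hrow j.succ; simpa using this
  rw [e1] at h; rw [e2] at h
  exact h

lemma body_pattern {n : ℕ} {k : Fin (n+1) → ℤ} {a : ℕ → ℕ → ℤ}
    (ha : IsGTPattern (n+1) k a) :
    IsGTPattern n (fun j : Fin n => a 1 ((j:ℕ)+1)) (fun i j => a (i+1) (j+1)) := by
  obtain ⟨h0, hrow, hineq⟩ := ha
  refine ⟨?_, ?_, ?_⟩
  · intro i j hij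
    exact h0 (i+1) (j+1) (by omega)
  · intro j; rfl
  · intro i j hij hjn
    have h := hineq (i+1) (j+1) (by omega) (by omega)
    have e : j + 1 - 1 = (j - 1) + 1 := by omega
    rw [e] at h
    exact h

lemma glue_pattern {n : ℕ} {k : Fin (n+1) → ℤ} {m : Fin n → ℤ} {b : ℕ → ℕ → ℤ}
    (hm : m ∈ box k) (hb : IsGTPattern n m b) :
    IsGTPattern (n+1) k (glue k b) := by
  obtain ⟨h0, hrow, hineq⟩ := hb
  rw [box, Fintype.mem_piFinset] at hm
  refine ⟨?_, ?_, ?_⟩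
  · intro i j hij
    unfold glue
    split
    · next hi =>
        subst hi
        rw [dif_neg (by omega)]
    · next hi =>
        split
        · rfl
        · next hj => exact h0 (i-1) (j-1) (by omega)
  · intro j
    unfold glue
    rw [if_pos rfl, dif_pos j.isLt]
  · intro i j hij hjn
    simp only [Nat.add_sub_cancel] at hjn
    rcases Nat.eq_zero_or_pos i with hi | hi
    · subst hi
      have hj1 : 1 ≤ j := hij
      have hjn' : j - 1 < n := by omega
      have egl1 : glue k b 1 j = m ⟨j-1, hjn'⟩ := by
        unfold glue
        rw [if_neg (by omega), if_neg (by omega)]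
        have := hrow ⟨j-1, hjn'⟩
        simpa using this
      have egl0 : glue k b 0 (j-1) = k ⟨j-1, by omega⟩ := by
        unfold glue
        rw [if_pos rfl, dif_pos (by omega)]
      have egl0' : glue k b 0 j = k ⟨j, by omega⟩ := by
        unfold glue
        rw [if_pos rfl, dif_pos (by omega)]
      rw [egl1, egl0, egl0']
      have := hm ⟨j-1, hjn'⟩
      rw [Finset.mem_Icc] at this
      have ecs : (⟨j-1, hjn'⟩ : Fin n).castSucc = ⟨j-1, by omega⟩ := by
        ext; simp
      have esc : (⟨j-1, hjn'⟩ : Fin n).succ = ⟨j, by omega⟩ := by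
        ext; simp; omega
      rw [ecs, esc] at this
      exact this
    · -- i ≥ 1
      have hj2 : 2 ≤ j := by omega
      have e1 : glue k b i (j-1) = b (i-1) (j-2) := by
        unfold glue
        rw [if_neg (by omega), if_neg (by omega), show j-1-1 = j-2 from by omega]
      have e2 : glue k b (i+1) j = b i (j-1) := by
        unfold glue
        rw [if_neg (by omega), if_neg (by omega), Nat.add_sub_cancel]
      have e3 : glue k b i j = b (i-1) (j-1) := by
        unfold glue
        rw [if_neg (by omega), if_neg (by omega)]
      rw [e1, e2, e3]
      have h := hineq (i-1) (j-1) (by omega) (by omega)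
      have e4 : j - 1 - 1 = j - 2 := by omega
      rw [e4] at h
      have e5 : i - 1 + 1 = i := by omega
      rw [e5] at h
      exact h

lemma glue_body {n : ℕ} {k : Fin (n+1) → ℤ} {a : ℕ → ℕ → ℤ}
    (ha : IsGTPattern (n+1) k a) :
    glue k (fun i j => a (i+1) (j+1)) = a := by
  obtain ⟨h0, hrow, hineq⟩ := ha
  funext i j
  unfold glue
  rcases Nat.eq_zero_or_pos i with hi | hi
  · subst hi
    rw [if_pos rfl]
    split
    · next h => exact (hrow ⟨j, h⟩).symm
    · next h => exact (h0 0 j (by omega)).symm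
  · rw [if_neg (by omega)]
    rcases Nat.eq_zero_or_pos j with hj | hj
    · subst hj
      rw [if_pos rfl]
      exact (h0 i 0 (by omega)).symm
    · rw [if_neg (by omega)]
      obtain ⟨i', rfl⟩ : ∃ i', i = i' + 1 := ⟨i - 1, by omega⟩
      obtain ⟨j', rfl⟩ : ∃ j', j = j' + 1 := ⟨j - 1, by omega⟩
      simp

lemma body_glue {n : ℕ} (k : Fin (n+1) → ℤ) (b : ℕ → ℕ → ℤ) :
    (fun i j => glue k b (i+1) (j+1)) = b := by
  funext i j
  unfold glue
  rw [if_neg (by omega), if_neg (by omega)]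
  simp

lemma row_glue {n : ℕ} (k : Fin (n+1) → ℤ) (m : Fin n → ℤ) (b : ℕ → ℕ → ℤ)
    (hb : IsGTPattern n m b) :
    (fun j : Fin n => glue k b 1 ((j:ℕ)+1)) = m := by
  funext j
  unfold glue
  rw [if_neg (by omega), if_neg (by omega)]
  simpa using hb.2.1 j

/-- The structural equivalence. -/
noncomputable def gtEquiv {n : ℕ} (k : Fin (n+1) → ℤ) :
    {a : ℕ → ℕ → ℤ // IsGTPattern (n+1) k a} ≃
      Σ m : (box k : Finset (Fin n → ℤ)), {b : ℕ → ℕ → ℤ // IsGTPattern n m.1 b} where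
  toFun a := ⟨⟨fun j => a.1 1 ((j:ℕ)+1), body_mem a.2⟩,
    ⟨fun i j => a.1 (i+1) (j+1), body_pattern a.2⟩⟩
  invFun p := ⟨glue k p.2.1, glue_pattern p.1.2 p.2.2⟩
  left_inv a := Subtype.ext (glue_body a.2)
  right_inv p := by
    obtain ⟨⟨m, hm⟩, ⟨b, hb⟩⟩ := p
    refine Sigma.ext ?_ ?_ <;> simp only
    · exact Subtype.ext (row_glue k m b hb)
    · rw [Subtype.heq_iff_coe_eq]
      · exact body_glue k b
      · intro x
        rw [row_glue k m b hb]

lemma gt_finite : ∀ (n : ℕ) (k : Fin n → ℤ), Finite {a : ℕ → ℕ → ℤ // IsGTPattern n k a} := by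
  intro n
  induction n with
  | zero =>
      intro k
      have : Subsingleton {a : ℕ → ℕ → ℤ // IsGTPattern 0 k a} := by
        constructor
        rintro ⟨a, ha, -, -⟩ ⟨b, hb, -, -⟩
        apply Subtype.ext
        funext i j
        show a i j = b i j
        rw [ha i j (by omega), hb i j (by omega)]
      exact Finite.of_subsingleton
  | succ n ih =>
      intro k
      have := fun m : (box k : Finset (Fin n → ℤ)) => ih m.1
      exact Finite.of_equiv _ (gtEquiv k).symm

lemma gt_card_succ {n : ℕ} (k : Fin (n+1) → ℤ) :
    Nat.card {a : ℕ → ℕ → ℤ // IsGTPattern (n+1) k a}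
      = ∑ m ∈ box k, Nat.card {b : ℕ → ℕ → ℤ // IsGTPattern n m b} := by
  classical
  rw [Nat.card_congr (gtEquiv k)]
  haveI : ∀ m : (box k : Finset (Fin n → ℤ)), Fintype {b : ℕ → ℕ → ℤ // IsGTPattern n m.1 b} :=
    fun m => @Fintype.ofFinite _ (gt_finite n m.1)
  rw [Nat.card_eq_fintype_card, Fintype.card_sigma]
  rw [← Finset.sum_coe_sort (box k) (fun m => Nat.card {b : ℕ → ℕ → ℤ // IsGTPattern n m b})]
  congr 1
  funext m
  rw [Nat.card_eq_fintype_card]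

lemma gt_card_one (k : Fin 1 → ℤ) :
    Nat.card {a : ℕ → ℕ → ℤ // IsGTPattern 1 k a} = 1 := by
  classical
  have : Nonempty {a : ℕ → ℕ → ℤ // IsGTPattern 1 k a} := by
    refine ⟨⟨fun i j => if i = 0 ∧ j = 0 then k 0 else 0, ?_, ?_, ?_⟩⟩
    · intro i j hij
      simp only
      rw [if_neg (by omega)]
    · intro j
      have : j = 0 := Subsingleton.elim _ _
      subst this
      simp
    · intro i j hij hjn
      exfalso
      simp only [Nat.reduceSub, Nat.le_zero] at hjn
      omega
  have hsub : Subsingleton {a : ℕ → ℕ → ℤ // IsGTPattern 1 k a} := by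
    constructor
    rintro ⟨a, ha0, ha1, -⟩ ⟨b, hb0, hb1, -⟩
    apply Subtype.ext
    funext i j
    show a i j = b i j
    rcases Nat.eq_zero_or_pos i with hi | hi
    · subst hi
      rcases Nat.eq_zero_or_pos j with hj | hj
      · subst hj
        rw [show a 0 0 = k 0 from by simpa using ha1 0,
            show b 0 0 = k 0 from by simpa using hb1 0]
      · rw [ha0 0 j (by omega), hb0 0 j (by omega)]
    · rw [ha0 i j (by omega), hb0 i j (by omega)]
  haveI := this; haveI := hsub
  exact Nat.card_unique




/-- bridge from pairs-filter form to Ioi form -/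
lemma prod_pairs_eq {N : ℕ} (f : Fin N → Fin N → ℚ) :
    ∏ p ∈ Finset.univ.filter (fun p : Fin N × Fin N => p.1 < p.2), f p.1 p.2
      = ∏ i : Fin N, ∏ j ∈ Finset.Ioi i, f i j := by
  rw [← Finset.prod_sigma (Finset.univ : Finset (Fin N)) (fun i => Finset.Ioi i)
    (fun x => f x.1 x.2)]
  refine Finset.prod_bij' (fun p _ => (⟨p.1, p.2⟩ : Σ _ : Fin N, Fin N))
    (fun x _ => (x.1, x.2)) ?_ ?_ ?_ ?_ ?_
  · rintro ⟨i, j⟩ h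
    rw [Finset.mem_filter] at h
    simp only [Finset.mem_sigma, Finset.mem_univ, Finset.mem_Ioi, true_and]
    exact h.2
  · rintro ⟨i, j⟩ h
    rw [Finset.mem_sigma] at h
    rw [Finset.mem_filter]
    exact ⟨Finset.mem_univ _, Finset.mem_Ioi.mp h.2⟩
  · rintro ⟨i, j⟩ h; rfl
  · rintro ⟨i, j⟩ h; rfl
  · rintro ⟨i, j⟩ h; rfl

/-- bridge from Fin-Ioi form to range-range form, for ℕ-total functions -/
lemma prod_ioi_eq_range {N : ℕ} (F : ℕ → ℕ → ℚ) :
    ∏ i : Fin N, ∏ j ∈ Finset.Ioi i, F (i : ℕ) (j : ℕ)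
      = ∏ j ∈ Finset.range N, ∏ i ∈ Finset.range j, F i j := by
  rw [← Finset.prod_sigma (Finset.univ : Finset (Fin N)) (fun i => Finset.Ioi i)
    (fun x => F (x.1 : ℕ) (x.2 : ℕ))]
  rw [← Finset.prod_sigma (Finset.range N) (fun j => Finset.range j)
    (fun x => F x.2 x.1)]
  refine Finset.prod_bij' (fun x _ => (⟨(x.2 : ℕ), (x.1 : ℕ)⟩ : Σ _ : ℕ, ℕ))
    (fun x hx => ⟨⟨x.2, ?_⟩, ⟨x.1, ?_⟩⟩) ?_ ?_ ?_ ?_ ?_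
  · rw [Finset.mem_sigma] at hx
    have h1 := Finset.mem_range.mp hx.1
    have h2 := Finset.mem_range.mp hx.2
    omega
  · rw [Finset.mem_sigma] at hx
    exact Finset.mem_range.mp hx.1
  · rintro ⟨i, j⟩ h
    rw [Finset.mem_sigma] at h
    have h2 := Finset.mem_Ioi.mp h.2
    rw [Finset.mem_sigma]
    exact ⟨Finset.mem_range.mpr j.isLt, Finset.mem_range.mpr h2⟩
  · rintro ⟨j, i⟩ h
    rw [Finset.mem_sigma] at h
    rw [Finset.mem_sigma]
    refine ⟨Finset.mem_univ _, Finset.mem_Ioi.mpr ?_⟩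
    exact Finset.mem_range.mp h.2
  · rintro ⟨i, j⟩ h; rfl
  · rintro ⟨j, i⟩ h; rfl
  · rintro ⟨i, j⟩ h; rfl

noncomputable def dd (N : ℕ) : ℚ :=
  ∏ i : Fin N, ∏ j ∈ Finset.Ioi i, (((j:ℕ) : ℚ) - ((i:ℕ) : ℚ))

lemma dd_eq_range (N : ℕ) :
    dd N = ∏ j ∈ Finset.range N, ∏ i ∈ Finset.range j, ((j : ℚ) - (i : ℚ)) :=
  prod_ioi_eq_range (fun i j => (j : ℚ) - (i : ℚ))

lemma dd_pos (N : ℕ) : 0 < dd N := by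
  rw [dd_eq_range]
  refine Finset.prod_pos fun j hj => Finset.prod_pos fun i hi => ?_
  rw [Finset.mem_range] at hi
  have : (i : ℚ) < (j : ℚ) := by exact_mod_cast hi
  linarith

lemma dd_succ (N : ℕ) : dd (N+1) = (N.factorial : ℚ) * dd N := by
  rw [dd_eq_range, dd_eq_range, Finset.prod_range_succ, mul_comm]
  congr 1
  rw [← Finset.prod_range_reflect (fun i => ((N:ℚ) - (i:ℚ))) N]
  have : ∀ x ∈ Finset.range N, ((N:ℚ) - ((N - 1 - x : ℕ) : ℚ)) = ((x+1 : ℕ) : ℚ) := by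
    intro x hx
    rw [Finset.mem_range] at hx
    have h1 : ((N - 1 - x : ℕ) : ℚ) = (N : ℚ) - 1 - (x : ℚ) := by
      have : N - 1 - x = N - (1 + x) := by omega
      rw [this]
      push_cast [Nat.cast_sub (by omega : 1 + x ≤ N)]
      ring
    rw [h1]; push_cast; ring
  rw [Finset.prod_congr rfl this]
  rw [← Nat.cast_prod]
  rw [Finset.prod_range_add_one_eq_factorial]


















lemma box_monotone {n : ℕ} {k : Fin (n+1) → ℤ} {m : Fin n → ℤ}
    (hm : m ∈ box k) : Monotone m := by
  rw [box, Fintype.mem_piFinset] at hm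
  have step : ∀ (j : Fin n) (h : (j:ℕ)+1 < n), m j ≤ m ⟨(j:ℕ)+1, h⟩ := by
    intro j h
    have h1 := (Finset.mem_Icc.mp (hm j)).2
    have h2 := (Finset.mem_Icc.mp (hm ⟨(j:ℕ)+1, h⟩)).1
    have e : (⟨(j:ℕ)+1, h⟩ : Fin n).castSucc = j.succ := by
      ext; simp
    rw [e] at h2
    exact h1.trans h2
  have main : ∀ d : ℕ, ∀ s t : Fin n, (t:ℕ) = (s:ℕ) + d → m s ≤ m t := by
    intro d
    induction d with
    | zero =>
        intro s t h
        have : s = t := Fin.ext (by omega)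
        subst this; exact le_refl _
    | succ d ihd =>
        intro s t h
        have hlt : (s:ℕ) + d < n := by omega
        set t' : Fin n := ⟨(s:ℕ)+d, hlt⟩ with ht'
        have h1 : m s ≤ m t' := ihd s t' rfl
        have h2 : m t' ≤ m t := by
          have e : t = ⟨(t':ℕ)+1, by simp [ht']; omega⟩ := Fin.ext (by simp [ht']; omega)
        
          rw [e]
          exact step t' _
        exact h1.trans h2
  intro s t hst
  exact main ((t:ℕ) - (s:ℕ)) s t (by omega)

lemma gt_main : ∀ n : ℕ, 1 ≤ n → ∀ k : Fin n → ℤ, Monotone k →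
    (Nat.card {a : ℕ → ℕ → ℤ // IsGTPattern n k a} : ℚ) * dd n
      = Dl (fun j => k j + (j : ℕ)) := by
  intro n hn
  induction n, hn using Nat.le_induction with
  | base =>
      intro k hk
      rw [gt_card_one k]
      have h1 : dd 1 = 1 := by
        rw [dd]
        apply Finset.prod_eq_one
        intro i _
        apply Finset.prod_eq_one
        intro j hj
        exfalso
        rw [Finset.mem_Ioi] at hj
        exact absurd (hj.trans_le (Fin.le_last j)) (by
          have : i = Fin.last 0 := Subsingleton.elim _ _
          rw [this]; exact lt_irrefl _)
      have h2 : Dl (fun j : Fin 1 => k j + (j:ℕ)) = 1 := by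
        rw [Dl]
        apply Finset.prod_eq_one
        intro i _
        apply Finset.prod_eq_one
        intro j hj
        exfalso
        rw [Finset.mem_Ioi] at hj
        exact absurd (hj.trans_le (Fin.le_last j)) (by
          have : i = Fin.last 0 := Subsingleton.elim _ _
          rw [this]; exact lt_irrefl _)
      rw [h1, h2]; norm_num
  | succ n hn ih =>
      intro k hk
      set l : Fin (n+1) → ℤ := fun j => k j + (j:ℕ) with hl
      have hlmono : Monotone l := by
        intro s t hst
        simp only [hl]
        have h1 : k s ≤ k t := hk hst
        have h2 : (s:ℕ) ≤ (t:ℕ) := hst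
        omega
      -- step 1: the cardinality recursion, cast to ℚ
      have hcard : (Nat.card {a : ℕ → ℕ → ℤ // IsGTPattern (n+1) k a} : ℚ)
          = ∑ m ∈ box k, (Nat.card {b : ℕ → ℕ → ℤ // IsGTPattern n m b} : ℚ) := by
        rw [gt_card_succ k]
        push_cast
        rfl
      -- step 2: apply IH to each m
      have hih : ∀ m ∈ box k, (Nat.card {b : ℕ → ℕ → ℤ // IsGTPattern n m b} : ℚ) * dd n
          = Dl (fun j => m j + (j:ℕ)) := fun m hm => ih m (box_monotone hm)
      -- step 3: reindex the sum
      have hreindex : ∑ m ∈ box k, Dl (fun j => m j + (j:ℕ))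
          = ∑ μ ∈ Fintype.piFinset (fun j : Fin n => Finset.Ioc (l j.castSucc) (l j.succ)),
              Dl μ := by
        refine Finset.sum_bij' (fun m _ => (fun j : Fin n => m j + (j:ℕ) + 1))
          (fun μ _ => (fun j : Fin n => μ j - ((j:ℕ) + 1))) ?_ ?_ ?_ ?_ ?_
        · intro m hm
          rw [box, Fintype.mem_piFinset] at hm
          rw [Fintype.mem_piFinset]
          intro j
          have h := Finset.mem_Icc.mp (hm j)
          rw [Finset.mem_Ioc]
          simp only [hl, Fin.coe_castSucc, Fin.val_succ]
          push_cast
          omega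
        · intro μ hμ
          rw [Fintype.mem_piFinset] at hμ
          rw [box, Fintype.mem_piFinset]
          intro j
          have h := Finset.mem_Ioc.mp (hμ j)
          rw [Finset.mem_Icc]
          simp only [hl, Fin.coe_castSucc, Fin.val_succ] at h
          push_cast at h ⊢
          omega
        · intro m hm
          funext j
          push_cast
          ring
        · intro μ hμ
          funext j
          push_cast
          ring
        · intro m hm
          rw [Dl, Dl]
          refine Finset.prod_congr rfl fun i _ => Finset.prod_congr rfl fun j _ => ?_
          push_cast
          ring
      calc (Nat.card {a : ℕ → ℕ → ℤ // IsGTPattern (n+1) k a} : ℚ) * dd (n+1)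
          = (∑ m ∈ box k, (Nat.card {b : ℕ → ℕ → ℤ // IsGTPattern n m b} : ℚ))
              * ((n.factorial : ℚ) * dd n) := by rw [hcard, dd_succ]
        _ = (n.factorial : ℚ) * ∑ m ∈ box k,
              ((Nat.card {b : ℕ → ℕ → ℤ // IsGTPattern n m b} : ℚ) * dd n) := by
            rw [Finset.sum_mul]
            rw [Finset.mul_sum]
            congr 1
            funext m
            ring
        _ = (n.factorial : ℚ) * ∑ m ∈ box k, Dl (fun j => m j + (j:ℕ)) := by
            congr 1
            exact Finset.sum_congr rfl hih
        _ = (n.factorial : ℚ) *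
              ∑ μ ∈ Fintype.piFinset (fun j : Fin n => Finset.Ioc (l j.castSucc) (l j.succ)),
                Dl μ := by rw [hreindex]
        _ = Dl l := key l hlmono


end GTProof
open GTProof in
/-- the number of Gelfand–Tsetlin patterns with bottom row (k_1,…,k_n),
k_1 ≤ … ≤ k_n, equals ∏_{1≤i<j≤n} (k_j - k_i + j - i)/(j - i). -/
theorem stmt_1 (n : ℕ) (hn : 1 ≤ n) (k : Fin n → ℤ) (hk : Monotone k) :
    ((Set.ncard {a : ℕ → ℕ → ℤ | IsGTPattern n k a}) : ℚ)
      = ∏ p ∈ Finset.univ.filter (fun p : Fin n × Fin n => p.1 < p.2),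
          (((k p.2 : ℤ) : ℚ) - ((k p.1 : ℤ) : ℚ) + (((p.2 : ℕ) : ℚ) - ((p.1 : ℕ) : ℚ)))
            / (((p.2 : ℕ) : ℚ) - ((p.1 : ℕ) : ℚ)) := by
  have hmain := gt_main n hn k hk
  have hncard : Set.ncard {a : ℕ → ℕ → ℤ | IsGTPattern n k a}
      = Nat.card {a : ℕ → ℕ → ℤ // IsGTPattern n k a} := by
    rw [← Nat.card_coe_set_eq]
    rfl
  rw [hncard]
  rw [Finset.prod_div_distrib]
  rw [prod_pairs_eq (fun i j : Fin n =>
    ((k j : ℚ) - (k i : ℚ) + (((j:ℕ):ℚ) - ((i:ℕ):ℚ))))]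
  rw [prod_pairs_eq (fun i j : Fin n => (((j:ℕ):ℚ) - ((i:ℕ):ℚ)))]
  have hnum : (∏ i : Fin n, ∏ j ∈ Finset.Ioi i,
      ((k j : ℚ) - (k i : ℚ) + (((j:ℕ):ℚ) - ((i:ℕ):ℚ))))
      = Dl (fun j => k j + (j:ℕ)) := by
    rw [Dl]
    refine Finset.prod_congr rfl fun i _ => Finset.prod_congr rfl fun j _ => ?_
    push_cast
    ring
  rw [hnum]
  have hdd := dd_pos n
  rw [dd] at hdd
  rw [eq_div_iff (ne_of_gt hdd)]
  rw [← hmain]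
  rfl
end

section
/- For integers k_1,…,k_n, the determinant det_{1≤i,j≤n} pbinom(k_i, j-1) equals P^{binom(n,2)} * ∏_{1≤i<j≤n} (P^{k_j} - P^{k_i})/(P^j - P^i), as an identity of rational functions in P. -/
/-- The P-binomial (Gaussian binomial) coefficient, P = RatFunc.X. -/
noncomputable def pbinom (x : ℤ) (m : ℕ) : RatFunc ℚ :=
  (∏ i ∈ Finset.range m, (1 - RatFunc.X ^ (x - i)))
    / (∏ i ∈ Finset.range m, (1 - RatFunc.X ^ ((i : ℤ) + 1)))

namespace Stmt4Aux

open Finset Polynomial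

noncomputable def K := RatFunc ℚ

local notation "P" => (RatFunc.X : RatFunc ℚ)

lemma hP : P ≠ 0 := RatFunc.X_ne_zero

lemma X_pow_nat (m : ℕ) : P ^ ((m : ℤ)) = P ^ m := zpow_natCast _ _

lemma X_pow_inj {a b : ℕ} (h : P ^ a = P ^ b) : a = b := by
  have h2 : (Polynomial.X : ℚ[X]) ^ a = Polynomial.X ^ b := by
    apply RatFunc.algebraMap_injective ℚ
    simpa [map_pow, RatFunc.algebraMap_X] using h
  simpa using congrArg Polynomial.natDegree h2

/-- denominator product -/
noncomputable def D (m : ℕ) : RatFunc ℚ := ∏ i ∈ Finset.range m, (1 - P ^ ((i : ℤ) + 1))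

lemma one_sub_X_pow_ne (m : ℕ) : (1 : RatFunc ℚ) - P ^ ((m : ℤ) + 1) ≠ 0 := by
  have : ((m : ℤ) + 1) = ((m + 1 : ℕ) : ℤ) := by push_cast; ring
  rw [this, X_pow_nat]
  intro h
  have h2 : ((1 : ℚ[X]) - Polynomial.X ^ (m + 1)) = 0 := by
    apply RatFunc.algebraMap_injective ℚ
    simpa [map_pow, RatFunc.algebraMap_X] using sub_eq_zero.mpr h.symm ▸ h
  have := congrArg (fun q => Polynomial.coeff q (m + 1)) h2
  simp [Polynomial.coeff_one, Nat.succ_ne_zero] at this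

lemma D_ne (m : ℕ) : D m ≠ 0 := by
  apply Finset.prod_ne_zero_iff.mpr
  intro i _
  exact one_sub_X_pow_ne i

lemma X_pow_sub_ne {a b : ℕ} (hab : a ≠ b) :
    P ^ ((a : ℤ) + 1) - P ^ ((b : ℤ) + 1) ≠ 0 := by
  intro h
  have h1 : P ^ ((a : ℤ) + 1) = P ^ ((b : ℤ) + 1) := sub_eq_zero.mp h
  have ha : ((a : ℤ) + 1) = ((a + 1 : ℕ) : ℤ) := by push_cast; ring
  have hb : ((b : ℤ) + 1) = ((b + 1 : ℕ) : ℤ) := by push_cast; ring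
  rw [ha, hb, X_pow_nat, X_pow_nat] at h1
  have := X_pow_inj h1
  omega

/-- key zpow algebra identity -/
lemma one_sub_eq (a b : ℤ) :
    (1 : RatFunc ℚ) - P ^ (a - b) = (-(P ^ (-b))) * (P ^ a - P ^ b) := by
  rw [neg_mul, mul_sub, ← zpow_add₀ hP, ← zpow_add₀ hP]
  have h1 : -b + a = a - b := by ring
  have h2 : -b + b = 0 := by ring
  rw [h1, h2, zpow_zero, neg_sub]

lemma one_sub_eq' (a b : ℤ) :
    (-(P ^ (-b))) * (P ^ (a + 1) - P ^ (b + 1)) = P * (1 - P ^ (a - b)) := by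
  have := one_sub_eq (a + 1) (b + 1)
  have h3 : a + 1 - (b + 1) = a - b := by ring
  rw [h3] at this
  calc (-(P ^ (-b))) * (P ^ (a + 1) - P ^ (b + 1))
      = P * ((-(P ^ (-(b + 1)))) * (P ^ (a + 1) - P ^ (b + 1))) := by
        rw [← mul_assoc]
        congr 1
        rw [mul_neg, ← zpow_one_add₀ hP]
        congr 2
        ring
    _ = P * (1 - P ^ (a - b)) := by rw [← this]

/-- the monic polynomial whose roots are P^0, ..., P^{m-1} -/
noncomputable def mp (m : ℕ) : Polynomial (RatFunc ℚ) :=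
  ∏ t ∈ Finset.range m, (Polynomial.X - Polynomial.C (P ^ t))

lemma mp_monic (m : ℕ) : (mp m).Monic :=
  Polynomial.monic_prod_of_monic _ _ fun _ _ => Polynomial.monic_X_sub_C _

lemma mp_natDegree (m : ℕ) : (mp m).natDegree = m := by
  rw [mp, Polynomial.natDegree_prod_of_monic _ _ fun _ _ => Polynomial.monic_X_sub_C _]
  simp only [Polynomial.natDegree_X_sub_C]
  simp

/-- the scalar column factor -/
noncomputable def cf (m : ℕ) : RatFunc ℚ :=
  (∏ t ∈ Finset.range m, (-(P ^ (-(t : ℤ))))) * (D m)⁻¹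

lemma pbinom_eq (x : ℤ) (m : ℕ) :
    pbinom x m = cf m * (mp m).eval (P ^ x) := by
  have hnum : (∏ i ∈ Finset.range m, (1 - P ^ (x - i)))
      = (∏ t ∈ Finset.range m, (-(P ^ (-(t : ℤ))))) * (mp m).eval (P ^ x) := by
    rw [mp, Polynomial.eval_prod, ← Finset.prod_mul_distrib]
    apply Finset.prod_congr rfl
    intro t _
    simp only [Polynomial.eval_sub, Polynomial.eval_X, Polynomial.eval_C]
    rw [one_sub_eq x t, ← X_pow_nat t]
  rw [pbinom, hnum, cf, ← D]
  field_simp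

lemma sum_range_id_choose (n : ℕ) : (∑ i ∈ Finset.range n, i) = n.choose 2 := by
  induction n with
  | zero => simp
  | succ n ih =>
    rw [Finset.sum_range_succ, ih, Nat.choose]
    simp [Nat.choose_one_right, Nat.add_comm]

/-- pairs-to-nested, Ioi form -/
lemma prod_pairs_Ioi {n : ℕ} {M : Type*} [CommMonoid M] (f : Fin n → Fin n → M) :
    ∏ p ∈ Finset.univ.filter (fun p : Fin n × Fin n => p.1 < p.2), f p.1 p.2
      = ∏ i : Fin n, ∏ j ∈ Finset.Ioi i, f i j := by
  rw [Finset.prod_sigma']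
  refine Finset.prod_nbij' (i := fun p : Fin n × Fin n => (⟨p.1, p.2⟩ : Σ _ : Fin n, Fin n))
    (j := fun x : Σ _ : Fin n, Fin n => (x.1, x.2)) ?_ ?_ ?_ ?_ ?_ <;>
    simp [Finset.mem_sigma, Finset.mem_Ioi]

/-- pairs-to-nested, Iio form -/
lemma prod_pairs_Iio {n : ℕ} {M : Type*} [CommMonoid M] (f : Fin n → Fin n → M) :
    ∏ p ∈ Finset.univ.filter (fun p : Fin n × Fin n => p.1 < p.2), f p.1 p.2
      = ∏ j : Fin n, ∏ i ∈ Finset.Iio j, f i j := by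
  rw [Finset.prod_sigma']
  refine Finset.prod_nbij' (i := fun p : Fin n × Fin n => (⟨p.2, p.1⟩ : Σ _ : Fin n, Fin n))
    (j := fun x : Σ _ : Fin n, Fin n => (x.2, x.1)) ?_ ?_ ?_ ?_ ?_ <;>
    simp [Finset.mem_sigma, Finset.mem_Iio]

/-- per-column scalar identity -/
lemma cf_mul_d {n : ℕ} (j : Fin n) :
    cf (j : ℕ) * (∏ i ∈ Finset.Iio j, (P ^ (((j : ℕ) : ℤ) + 1) - P ^ (((i : ℕ) : ℤ) + 1)))
      = P ^ (j : ℕ) := by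
  have hIio : (∏ i ∈ Finset.Iio j, (P ^ (((j : ℕ) : ℤ) + 1) - P ^ (((i : ℕ) : ℤ) + 1)))
      = ∏ t ∈ Finset.range (j : ℕ), (P ^ (((j : ℕ) : ℤ) + 1) - P ^ ((t : ℤ) + 1)) := by
    refine Finset.prod_bij' (i := fun (i : Fin n) (_ : i ∈ Finset.Iio j) => (i : ℕ))
      (j := fun t ht => (⟨t, lt_trans (Finset.mem_range.mp ht) j.2⟩ : Fin n)) ?_ ?_ ?_ ?_ ?_
    · intro a ha
      exact Finset.mem_range.mpr (Fin.lt_def.mp (Finset.mem_Iio.mp ha))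
    · intro t ht
      exact Finset.mem_Iio.mpr (Fin.lt_def.mpr (Finset.mem_range.mp ht))
    · intro a ha; rfl
    · intro t ht; rfl
    · intro a ha; rfl
  have hpair : ∏ t ∈ Finset.range (j : ℕ),
      ((-(P ^ (-(t : ℤ)))) * (P ^ (((j : ℕ) : ℤ) + 1) - P ^ ((t : ℤ) + 1)))
      = P ^ (j : ℕ) * D (j : ℕ) := by
    have h1 : ∀ t ∈ Finset.range (j : ℕ),
        (-(P ^ (-(t : ℤ)))) * (P ^ (((j : ℕ) : ℤ) + 1) - P ^ ((t : ℤ) + 1))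
          = P * (1 - P ^ (((j : ℕ) : ℤ) - t)) := fun t _ => one_sub_eq' _ _
    rw [Finset.prod_congr rfl h1, Finset.prod_mul_distrib, Finset.prod_const, Finset.card_range]
    congr 1
    rw [D]
    conv_rhs => rw [← Finset.prod_range_reflect (fun m => 1 - P ^ ((m : ℤ) + 1)) (j : ℕ)]
    apply Finset.prod_congr rfl
    intro t ht
    have htj := Finset.mem_range.mp ht
    congr 2
    push_cast [Nat.cast_sub (by omega : t ≤ (j : ℕ) - 1), Nat.cast_sub (by omega : 1 ≤ (j : ℕ))]
    ring
  rw [hIio, cf]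
  calc (∏ t ∈ Finset.range (j : ℕ), (-(P ^ (-(t : ℤ))))) * (D (j : ℕ))⁻¹ *
        ∏ t ∈ Finset.range (j : ℕ), (P ^ (((j : ℕ) : ℤ) + 1) - P ^ ((t : ℤ) + 1))
      = ((∏ t ∈ Finset.range (j : ℕ), (-(P ^ (-(t : ℤ))))) *
          ∏ t ∈ Finset.range (j : ℕ), (P ^ (((j : ℕ) : ℤ) + 1) - P ^ ((t : ℤ) + 1))) *
          (D (j : ℕ))⁻¹ := by ring
    _ = (P ^ (j : ℕ) * D (j : ℕ)) * (D (j : ℕ))⁻¹ := by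
          rw [← Finset.prod_mul_distrib, hpair]
    _ = P ^ (j : ℕ) := by
          rw [mul_assoc, mul_inv_cancel₀ (D_ne _), mul_one]

end Stmt4Aux

/-- det_{1≤i,j≤n} pbinom(k_i, j-1)
    = P^{binom(n,2)} ∏_{1≤i<j≤n} (P^{k_j} - P^{k_i})/(P^j - P^i).
    Rows/columns are indexed by Fin n (0-based, so column j corresponds to j-1). -/
theorem stmt_4 (n : ℕ) (k : Fin n → ℤ) :
    Matrix.det (Matrix.of fun i j : Fin n => pbinom (k i) (j : ℕ))
      = RatFunc.X ^ (n.choose 2) *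
        ∏ p ∈ Finset.univ.filter (fun p : Fin n × Fin n => p.1 < p.2),
          (RatFunc.X ^ (k p.2) - RatFunc.X ^ (k p.1))
            / (RatFunc.X ^ (((p.2 : ℕ) : ℤ) + 1) - RatFunc.X ^ (((p.1 : ℕ) : ℤ) + 1)) := by
  classical
  set y : Fin n → RatFunc ℚ := fun i => RatFunc.X ^ (k i) with hy
  have hM : (Matrix.of fun i j : Fin n => pbinom (k i) (j : ℕ))
      = Matrix.of fun i j : Fin n => Stmt4Aux.cf (j : ℕ) * (Stmt4Aux.mp (j : ℕ)).eval (y i) := by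
    ext i j
    exact Stmt4Aux.pbinom_eq _ _
  have hdet : Matrix.det (Matrix.of fun i j : Fin n =>
        Stmt4Aux.cf (j : ℕ) * (Stmt4Aux.mp (j : ℕ)).eval (y i))
      = (∏ j : Fin n, Stmt4Aux.cf (j : ℕ)) *
        Matrix.det (Matrix.of fun i j : Fin n => (Stmt4Aux.mp (j : ℕ)).eval (y i)) :=
    Matrix.det_mul_row _ _
  have hv : Matrix.det (Matrix.of fun i j : Fin n => (Stmt4Aux.mp (j : ℕ)).eval (y i))
      = ∏ i : Fin n, ∏ j ∈ Finset.Ioi i, (y j - y i) := by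
    rw [← Matrix.det_eval_matrixOfPolynomials_eq_det_vandermonde y (fun j => Stmt4Aux.mp (j : ℕ))
      (fun j => Stmt4Aux.mp_natDegree _) (fun j => Stmt4Aux.mp_monic _),
      Matrix.det_vandermonde]
  have hsplit : (∏ p ∈ Finset.univ.filter (fun p : Fin n × Fin n => p.1 < p.2),
        (RatFunc.X ^ (k p.2) - RatFunc.X ^ (k p.1))
          / ((RatFunc.X : RatFunc ℚ) ^ (((p.2 : ℕ) : ℤ) + 1) - RatFunc.X ^ (((p.1 : ℕ) : ℤ) + 1)))
      = (∏ p ∈ Finset.univ.filter (fun p : Fin n × Fin n => p.1 < p.2),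
          (RatFunc.X ^ (k p.2) - RatFunc.X ^ (k p.1)))
        / (∏ p ∈ Finset.univ.filter (fun p : Fin n × Fin n => p.1 < p.2),
          ((RatFunc.X : RatFunc ℚ) ^ (((p.2 : ℕ) : ℤ) + 1) - RatFunc.X ^ (((p.1 : ℕ) : ℤ) + 1))) := by
    rw [Finset.prod_div_distrib]
  have hnum : (∏ p ∈ Finset.univ.filter (fun p : Fin n × Fin n => p.1 < p.2),
        (RatFunc.X ^ (k p.2) - RatFunc.X ^ (k p.1)))
      = ∏ i : Fin n, ∏ j ∈ Finset.Ioi i, (y j - y i) :=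
    Stmt4Aux.prod_pairs_Ioi (fun i j => y j - y i)
  have hden : (∏ p ∈ Finset.univ.filter (fun p : Fin n × Fin n => p.1 < p.2),
        ((RatFunc.X : RatFunc ℚ) ^ (((p.2 : ℕ) : ℤ) + 1) - RatFunc.X ^ (((p.1 : ℕ) : ℤ) + 1)))
      = ∏ j : Fin n, ∏ i ∈ Finset.Iio j,
          (RatFunc.X ^ (((j : ℕ) : ℤ) + 1) - RatFunc.X ^ (((i : ℕ) : ℤ) + 1)) :=
    Stmt4Aux.prod_pairs_Iio
      (fun i j => RatFunc.X ^ (((j : ℕ) : ℤ) + 1) - RatFunc.X ^ (((i : ℕ) : ℤ) + 1))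
  have hDp : (∏ p ∈ Finset.univ.filter (fun p : Fin n × Fin n => p.1 < p.2),
        ((RatFunc.X : RatFunc ℚ) ^ (((p.2 : ℕ) : ℤ) + 1) - RatFunc.X ^ (((p.1 : ℕ) : ℤ) + 1))) ≠ 0 := by
    rw [hden]
    apply Finset.prod_ne_zero_iff.mpr
    intro j _
    apply Finset.prod_ne_zero_iff.mpr
    intro i hi
    have hlt : (i : ℕ) < (j : ℕ) := Fin.lt_def.mp (Finset.mem_Iio.mp hi)
    exact Stmt4Aux.X_pow_sub_ne (by omega)
  have hscal : (∏ j : Fin n, Stmt4Aux.cf (j : ℕ)) *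
      (∏ p ∈ Finset.univ.filter (fun p : Fin n × Fin n => p.1 < p.2),
        ((RatFunc.X : RatFunc ℚ) ^ (((p.2 : ℕ) : ℤ) + 1) - RatFunc.X ^ (((p.1 : ℕ) : ℤ) + 1)))
      = RatFunc.X ^ (n.choose 2) := by
    rw [hden, ← Finset.prod_mul_distrib,
      Finset.prod_congr rfl (fun j _ => Stmt4Aux.cf_mul_d j),
      Finset.prod_pow_eq_pow_sum]
    congr 1
    rw [Fin.sum_univ_eq_sum_range (fun i => i)]
    exact Stmt4Aux.sum_range_id_choose n
  have hcf : (∏ j : Fin n, Stmt4Aux.cf (j : ℕ))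
      = RatFunc.X ^ (n.choose 2) /
        (∏ p ∈ Finset.univ.filter (fun p : Fin n × Fin n => p.1 < p.2),
          ((RatFunc.X : RatFunc ℚ) ^ (((p.2 : ℕ) : ℤ) + 1) - RatFunc.X ^ (((p.1 : ℕ) : ℤ) + 1))) :=
    (eq_div_iff hDp).mpr hscal
  rw [hM, hdet, hv, hsplit, hnum, hcf, div_mul_eq_mul_div, mul_div_assoc]
end

section
/- For integers 1 ≤ l ≤ n, the product identity ∏_{1≤i<j≤n, i,j≠l} (j-i) / ∏_{1≤i<j≤n-1} (j-i) = binom(n-1, l-1) holds. -/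
open Finset

/-- ∏_{i<k} (k - i) = k! in ℚ. -/
lemma aux_prod_range_sub (k : ℕ) :
    ∏ i ∈ Finset.range k, ((k : ℚ) - i) = k.factorial := by
  rw [← Finset.prod_range_reflect]
  have : (k.factorial : ℚ) = ∏ i ∈ Finset.range k, ((i : ℚ) + 1) := by
    rw [← Finset.prod_range_add_one_eq_factorial]
    push_cast
    rfl
  rw [this]
  apply Finset.prod_congr rfl
  intro i hi
  have hik : i < k := Finset.mem_range.mp hi
  have h : k - 1 - i + (i + 1) = k := by omega
  have h' : ((k - 1 - i : ℕ) : ℚ) + ((i : ℚ) + 1) = (k : ℚ) := by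
    exact_mod_cast congrArg (Nat.cast : ℕ → ℚ) h
  linarith

/-- ∏_{i ∈ Icc 1 (j-1)} (j - i) = (j-1)! in ℚ. -/
lemma aux_prod_Icc_sub (j : ℕ) :
    ∏ i ∈ Finset.Icc 1 (j - 1), ((j : ℚ) - i) = (j - 1).factorial := by
  rcases Nat.eq_zero_or_pos j with hj | hj
  · subst hj; simp
  · have hj1 : j = (j - 1) + 1 := by omega
    rw [show Finset.Icc 1 (j - 1) = Finset.Ico 1 ((j - 1) + 1) by
      rw [Finset.Ico_add_one_right_eq_Icc]]
    rw [Finset.prod_Ico_eq_prod_range]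
    have : ∀ i ∈ Finset.range ((j - 1) + 1 - 1), ((j : ℚ) - (1 + i : ℕ)) =
        (((j - 1) : ℕ) : ℚ) - i := by
      intro i _
      have : ((j - 1 : ℕ) : ℚ) = (j : ℚ) - 1 := by
        rw [Nat.cast_sub hj, Nat.cast_one]
      rw [this]; push_cast; ring
    rw [Finset.prod_congr rfl this]
    simpa using aux_prod_range_sub (j - 1)

/-- Unfold a filtered product over a product set into an iterated product. -/
lemma aux_prod_filter_product {P : ℕ × ℕ → Prop} [DecidablePred P]
    (s t : Finset ℕ) (f : ℕ × ℕ → ℚ) :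
    ∏ p ∈ (s ×ˢ t).filter P, f p
      = ∏ j ∈ t, ∏ i ∈ s.filter (fun i => P (i, j)), f (i, j) := by
  rw [Finset.prod_filter, Finset.prod_product_right]
  exact Finset.prod_congr rfl fun j _ => (Finset.prod_filter _ _).symm

/-- The full triangular product equals the superfactorial. -/
lemma aux_denom (m : ℕ) :
    (∏ p ∈ (Finset.Icc 1 m ×ˢ Finset.Icc 1 m).filter
        (fun p : ℕ × ℕ => p.1 < p.2), ((p.2 : ℚ) - (p.1 : ℚ)))
      = ∏ j ∈ Finset.Icc 1 m, ((j - 1).factorial : ℚ) := by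
  rw [aux_prod_filter_product (Finset.Icc 1 m) (Finset.Icc 1 m)
      (fun p : ℕ × ℕ => ((p.2 : ℚ) - (p.1 : ℚ)))]
  apply Finset.prod_congr rfl
  intro j hj
  have hjm : 1 ≤ j ∧ j ≤ m := Finset.mem_Icc.mp hj
  have hset : (Finset.Icc 1 m).filter (fun i => i < j) = Finset.Icc 1 (j - 1) := by
    ext i
    simp only [Finset.mem_filter, Finset.mem_Icc]
    omega
  rw [hset, aux_prod_Icc_sub]

theorem aux_sf_ne_zero (m : ℕ) : (∏ j ∈ Finset.Icc 1 m, ((j - 1).factorial : ℚ)) ≠ 0 :=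
  Finset.prod_ne_zero_iff.mpr fun j _ => by
    exact_mod_cast Nat.factorial_ne_zero (j - 1)

/-- ∏_{1≤i<j≤n, i,j≠l} (j-i) / ∏_{1≤i<j≤n-1} (j-i) = binom(n-1, l-1). -/
theorem stmt_9 (n l : ℕ) (hl : 1 ≤ l) (hln : l ≤ n) :
    (∏ p ∈ (Finset.Icc 1 n ×ˢ Finset.Icc 1 n).filter
        (fun p : ℕ × ℕ => p.1 < p.2 ∧ p.1 ≠ l ∧ p.2 ≠ l), ((p.2 : ℚ) - (p.1 : ℚ)))
      / (∏ p ∈ (Finset.Icc 1 (n - 1) ×ˢ Finset.Icc 1 (n - 1)).filter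
        (fun p : ℕ × ℕ => p.1 < p.2), ((p.2 : ℚ) - (p.1 : ℚ)))
    = (n - 1).choose (l - 1) := by
  classical
  -- Rewrite denominator
  rw [aux_denom]
  -- Numerator as iterated product
  have hnum : (∏ p ∈ (Finset.Icc 1 n ×ˢ Finset.Icc 1 n).filter
        (fun p : ℕ × ℕ => p.1 < p.2 ∧ p.1 ≠ l ∧ p.2 ≠ l), ((p.2 : ℚ) - (p.1 : ℚ)))
      = ∏ j ∈ Finset.Icc 1 n,
          ∏ i ∈ (Finset.Icc 1 n).filter (fun i => i < j ∧ i ≠ l ∧ j ≠ l),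
            ((j : ℚ) - i) := by
    exact aux_prod_filter_product (Finset.Icc 1 n) (Finset.Icc 1 n)
      (fun p : ℕ × ℕ => ((p.2 : ℚ) - (p.1 : ℚ)))
  rw [hnum]
  -- turn outer product into product over (Icc 1 n).erase l and simplify inner sets
  set g : ℕ → ℚ := fun j => ∏ i ∈ (Finset.Icc 1 (j - 1)).erase l, ((j : ℚ) - i) with hg
  have hstep : (∏ j ∈ Finset.Icc 1 n,
          ∏ i ∈ (Finset.Icc 1 n).filter (fun i => i < j ∧ i ≠ l ∧ j ≠ l),
            ((j : ℚ) - i))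
      = ∏ j ∈ (Finset.Icc 1 n).erase l, g j := by
    rw [← Finset.prod_erase (Finset.Icc 1 n)
        (a := l) (f := fun j => ∏ i ∈ (Finset.Icc 1 n).filter
            (fun i => i < j ∧ i ≠ l ∧ j ≠ l), ((j : ℚ) - i))
        (by simp)]
    apply Finset.prod_congr rfl
    intro j hj
    have hjl : j ≠ l := (Finset.mem_erase.mp hj).1
    have hjn : 1 ≤ j ∧ j ≤ n := Finset.mem_Icc.mp (Finset.mem_erase.mp hj).2
    congr 1
    ext i
    simp only [Finset.mem_filter, Finset.mem_Icc, Finset.mem_erase]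
    constructor
    · rintro ⟨⟨h1, h2⟩, h3, h4, _⟩; exact ⟨h4, by omega⟩
    · rintro ⟨h4, h1, h2⟩; exact ⟨⟨h1, by omega⟩, by omega, h4, hjl⟩
  rw [hstep]
  set h : ℕ → ℚ := fun j => if l < j then (j : ℚ) - (l : ℚ) else 1 with hh
  -- key pointwise identity
  have hkey : ∀ j ∈ (Finset.Icc 1 n).erase l, g j * h j = ((j - 1).factorial : ℚ) := by
    intro j hj
    have hjl : j ≠ l := (Finset.mem_erase.mp hj).1
    by_cases hlj : l < j
    · have hl_mem : l ∈ Finset.Icc 1 (j - 1) := Finset.mem_Icc.mpr ⟨hl, by omega⟩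
      have := Finset.prod_erase_mul (Finset.Icc 1 (j - 1))
          (fun i => ((j : ℚ) - i)) hl_mem
      simp only [hg, hh, if_pos hlj]
      rw [this, aux_prod_Icc_sub]
    · have hl_not : l ∉ Finset.Icc 1 (j - 1) := by
        simp only [Finset.mem_Icc]; omega
      simp only [hg, hh, if_neg hlj, mul_one, Finset.erase_eq_of_notMem hl_not]
      exact aux_prod_Icc_sub j
  -- product of h over erase l equals (n-l)!
  have hprod_h : ∏ j ∈ (Finset.Icc 1 n).erase l, h j = ((n - l).factorial : ℚ) := by
    have h1 : ∏ j ∈ (Finset.Icc 1 n).erase l, h j = ∏ j ∈ Finset.Icc 1 n, h j := by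
      apply Finset.prod_erase
      simp [hh]
    rw [h1]
    rw [← Finset.prod_filter_mul_prod_filter_not (Finset.Icc 1 n) (fun j => l < j) h]
    have h2 : ∏ j ∈ (Finset.Icc 1 n).filter (fun j => ¬ l < j), h j = 1 := by
      apply Finset.prod_eq_one
      intro j hj
      have := (Finset.mem_filter.mp hj).2
      simp [hh, this]
    rw [h2, mul_one]
    have h3 : (Finset.Icc 1 n).filter (fun j => l < j) = Finset.Ico (l + 1) (n + 1) := by
      ext j
      simp only [Finset.mem_filter, Finset.mem_Icc, Finset.mem_Ico]
      omega
    rw [h3, Finset.prod_Ico_eq_prod_range]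
    have h4 : ∀ i ∈ Finset.range (n + 1 - (l + 1)), h (l + 1 + i) = (i : ℚ) + 1 := by
      intro i _
      simp only [hh, if_pos (by omega : l < l + 1 + i)]
      push_cast; ring
    rw [Finset.prod_congr rfl h4]
    have h5 : n + 1 - (l + 1) = n - l := by omega
    rw [h5, ← Finset.prod_range_add_one_eq_factorial (n - l)]
    push_cast
    rfl
  -- product of (j-1)! over erase l
  have hsf_erase : (∏ j ∈ (Finset.Icc 1 n).erase l, ((j - 1).factorial : ℚ))
        * ((l - 1).factorial : ℚ)
      = ∏ j ∈ Finset.Icc 1 n, ((j - 1).factorial : ℚ) := by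
    exact Finset.prod_erase_mul _ _ (Finset.mem_Icc.mpr ⟨hl, hln⟩)
  have hmain : (∏ j ∈ (Finset.Icc 1 n).erase l, g j) * ((n - l).factorial : ℚ)
        * ((l - 1).factorial : ℚ)
      = ∏ j ∈ Finset.Icc 1 n, ((j - 1).factorial : ℚ) := by
    calc (∏ j ∈ (Finset.Icc 1 n).erase l, g j) * ((n - l).factorial : ℚ)
          * ((l - 1).factorial : ℚ)
        = ((∏ j ∈ (Finset.Icc 1 n).erase l, g j)
            * ∏ j ∈ (Finset.Icc 1 n).erase l, h j) * ((l - 1).factorial : ℚ) := by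
          rw [hprod_h]
      _ = (∏ j ∈ (Finset.Icc 1 n).erase l, g j * h j) * ((l - 1).factorial : ℚ) := by
          rw [Finset.prod_mul_distrib]
      _ = (∏ j ∈ (Finset.Icc 1 n).erase l, ((j - 1).factorial : ℚ))
            * ((l - 1).factorial : ℚ) := by
          rw [Finset.prod_congr rfl hkey]
      _ = _ := hsf_erase
  -- superfactorial recursion
  have hrec : ∏ j ∈ Finset.Icc 1 n, ((j - 1).factorial : ℚ)
      = (∏ j ∈ Finset.Icc 1 (n - 1), ((j - 1).factorial : ℚ)) * ((n - 1).factorial : ℚ) := by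
    have : Finset.Icc 1 n = insert n (Finset.Icc 1 (n - 1)) := by
      ext j
      simp only [Finset.mem_Icc, Finset.mem_insert]
      omega
    rw [this, Finset.prod_insert (by simp only [Finset.mem_Icc]; omega)]
    ring
  -- choose identity
  have hchoose : ((n - 1).choose (l - 1) : ℚ) * ((l - 1).factorial : ℚ)
        * ((n - l).factorial : ℚ) = ((n - 1).factorial : ℚ) := by
    have hle : l - 1 ≤ n - 1 := by omega
    have := Nat.choose_mul_factorial_mul_factorial hle
    have heq : n - 1 - (l - 1) = n - l := by omega
    rw [heq] at this
    exact_mod_cast congrArg (Nat.cast : ℕ → ℚ) this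
  -- finish
  have hne : (∏ j ∈ Finset.Icc 1 (n - 1), ((j - 1).factorial : ℚ)) ≠ 0 :=
    aux_sf_ne_zero (n - 1)
  have hfl : ((l - 1).factorial : ℚ) ≠ 0 := by
    exact_mod_cast Nat.factorial_ne_zero (l - 1)
  have hfn : ((n - l).factorial : ℚ) ≠ 0 := by
    exact_mod_cast Nat.factorial_ne_zero (n - l)
  rw [div_eq_iff hne]
  rw [hrec] at hmain
  have h6 : (∏ j ∈ (Finset.Icc 1 n).erase l, g j)
        * (((n - l).factorial : ℚ) * ((l - 1).factorial : ℚ))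
      = (((n - 1).choose (l - 1) : ℚ)
          * ∏ j ∈ Finset.Icc 1 (n - 1), ((j - 1).factorial : ℚ))
        * (((n - l).factorial : ℚ) * ((l - 1).factorial : ℚ)) := by
    calc (∏ j ∈ (Finset.Icc 1 n).erase l, g j)
          * (((n - l).factorial : ℚ) * ((l - 1).factorial : ℚ))
        = (∏ j ∈ (Finset.Icc 1 n).erase l, g j) * ((n - l).factorial : ℚ)
            * ((l - 1).factorial : ℚ) := by ring
      _ = (∏ j ∈ Finset.Icc 1 (n - 1), ((j - 1).factorial : ℚ))
            * ((n - 1).factorial : ℚ) := hmain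
      _ = (∏ j ∈ Finset.Icc 1 (n - 1), ((j - 1).factorial : ℚ))
            * (((n - 1).choose (l - 1) : ℚ) * ((l - 1).factorial : ℚ)
              * ((n - l).factorial : ℚ)) := by rw [hchoose]
      _ = _ := by ring
  exact mul_right_cancel₀ (mul_ne_zero hfn hfl) h6
end

section
/- For any strictly increasing integer sequence k_1 < … < k_n, the signed sum over all {(0,0)}-triangles with bottom row (k_1,…,k_n) with weight (-1)^{number of special entries} equals the number of monotone triangles with bottom row (k_1,…,k_n). -/
/-- A monotone triangle with n rows, encoded 0-based (row 0 is the bottom row, entries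
`a i j` for i ≤ j ≤ n-1); entries outside the array are normalized to 0. -/
def IsMonotoneTriangle (n : ℕ) (k : Fin n → ℤ) (a : ℕ → ℕ → ℤ) : Prop :=
  (∀ i j : ℕ, ¬(i ≤ j ∧ j < n) → a i j = 0) ∧
  (∀ j : Fin n, a 0 (j : ℕ) = k j) ∧
  (∀ i j : ℕ, i + 1 ≤ j → j ≤ n - 1 → a i (j - 1) ≤ a (i + 1) j ∧ a (i + 1) j ≤ a i j) ∧
  (∀ i j : ℕ, i ≤ j → j + 2 ≤ n → a i j < a i (j + 1))

/-- A {(0,0)}-triangle with bottom row k: a triangular array `a` (0-based as above)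
together with a set M of non-row-adjacent special inner entries; a special entry equals
both of its parents (its two neighbours in the row above), and every entry not in the
bottom row which is not a parent of a special entry lies weakly between its two bottom
neighbours. -/
def Is00Triangle (n : ℕ) (k : Fin n → ℤ) (a : ℕ → ℕ → ℤ) (M : Finset (ℕ × ℕ)) : Prop :=
  (∀ i j : ℕ, ¬(i ≤ j ∧ j < n) → a i j = 0) ∧
  (∀ j : Fin n, a 0 (j : ℕ) = k j) ∧
  (∀ p ∈ M, p.1 < p.2 ∧ p.2 + 2 ≤ n) ∧
  (∀ p ∈ M, (p.1, p.2 + 1) ∉ M) ∧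
  (∀ p ∈ M, a (p.1 + 1) p.2 = a p.1 p.2 ∧ a (p.1 + 1) (p.2 + 1) = a p.1 p.2) ∧
  (∀ i j : ℕ, i + 1 ≤ j → j ≤ n - 1 → (i, j - 1) ∉ M → (i, j) ∉ M →
    a i (j - 1) ≤ a (i + 1) j ∧ a (i + 1) j ≤ a i j)

open scoped Classical


section Aux

variable {n : ℕ} {k : Fin n → ℤ} {a : ℕ → ℕ → ℤ} {M : Finset (ℕ × ℕ)}

/-- Row `r` has an equal adjacent pair at columns `j`, `j+1`. -/
def BadAt (n : ℕ) (a : ℕ → ℕ → ℤ) (r j : ℕ) : Prop :=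
  r ≤ j ∧ j + 2 ≤ n ∧ a r j = a r (j + 1)

lemma t00_sandwich (h : Is00Triangle n k a M) (r j : ℕ) (hr : r + 1 ≤ j) (hj : j + 1 ≤ n)
    (mono : ∀ j', r ≤ j' → j' + 2 ≤ n → a r j' ≤ a r (j' + 1)) :
    a r (j - 1) ≤ a (r + 1) j ∧ a (r + 1) j ≤ a r j := by
  obtain ⟨hz, hb, hrg, hadj, hsp, hin⟩ := h
  by_cases h1 : (r, j) ∈ M
  · have e1 : a (r + 1) j = a r j := (hsp _ h1).1
    have hr2 := hrg _ h1
    have hlt : r < j := hr2.1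
    have hn2 : j + 2 ≤ n := hr2.2
    have m1 : a r (j - 1) ≤ a r (j - 1 + 1) := mono (j - 1) (by omega) (by omega)
    rw [show j - 1 + 1 = j by omega] at m1
    exact ⟨by linarith, le_of_eq e1⟩
  · by_cases h2 : (r, j - 1) ∈ M
    · have hr2 := hrg _ h2
      have hlt : r < j - 1 := hr2.1
      have hn2 : j - 1 + 2 ≤ n := hr2.2
      have e2 : a (r + 1) (j - 1 + 1) = a r (j - 1) := (hsp _ h2).2
      rw [show j - 1 + 1 = j by omega] at e2
      have m1 : a r (j - 1) ≤ a r (j - 1 + 1) := mono (j - 1) (by omega) (by omega)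
      rw [show j - 1 + 1 = j by omega] at m1
      exact ⟨le_of_eq e2.symm, by linarith⟩
    · exact hin r j hr (by omega) h2 h1

lemma t00_mono_row (hk : StrictMono k) (h : Is00Triangle n k a M) :
    ∀ r j, r ≤ j → j + 2 ≤ n → a r j ≤ a r (j + 1) := by
  intro r
  induction r with
  | zero =>
    intro j hj hjn
    have e1 : a 0 j = k ⟨j, by omega⟩ := h.2.1 ⟨j, by omega⟩
    have e2 : a 0 (j + 1) = k ⟨j + 1, by omega⟩ := h.2.1 ⟨j + 1, by omega⟩
    rw [e1, e2]
    exact (hk (show (⟨j, by omega⟩ : Fin n) < ⟨j + 1, by omega⟩ from Fin.mk_lt_mk.mpr (by omega))).le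
  | succ r ih =>
    intro j hj hjn
    have s1 := t00_sandwich h r j (by omega) (by omega) ih
    have s2 := t00_sandwich h r (j + 1) (by omega) (by omega) ih
    have s21 : a r j ≤ a (r + 1) (j + 1) := s2.1
    linarith [s1.2]

lemma t00_bound (hn : 1 ≤ n) (hk : StrictMono k) (h : Is00Triangle n k a M) :
    ∀ r j, r ≤ j → j + 1 ≤ n → k ⟨0, hn⟩ ≤ a r j ∧ a r j ≤ k ⟨n - 1, by omega⟩ := by
  intro r
  induction r with
  | zero =>
    intro j hj hjn
    have e1 : a 0 j = k ⟨j, by omega⟩ := h.2.1 ⟨j, by omega⟩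
    rw [e1]
    exact ⟨hk.monotone (Fin.mk_le_mk.mpr (by omega)), hk.monotone (Fin.mk_le_mk.mpr (by omega))⟩
  | succ r ih =>
    intro j hj hjn
    have s := t00_sandwich h r j (by omega) (by omega) (t00_mono_row hk h r)
    have b1 := ih (j - 1) (by omega) (by omega)
    have b2 := ih j (by omega) hjn
    exact ⟨le_trans b1.1 s.1, le_trans s.2 b2.2⟩

lemma t00_row_strict (hk : StrictMono k) (h : Is00Triangle n k a M) (i : ℕ)
    (hnb : ∀ j, ¬ BadAt n a i j) :
    ∀ j, i ≤ j → j + 2 ≤ n → a i j < a i (j + 1) := fun j hj hjn =>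
  lt_of_le_of_ne (t00_mono_row hk h i j hj hjn) (fun e => hnb j ⟨hj, hjn, e⟩)

lemma t00_mem_bad (h : Is00Triangle n k a M) {p : ℕ × ℕ} (hp : p ∈ M) :
    BadAt n a (p.1 + 1) p.2 := by
  have hr := h.2.2.1 _ hp
  have e1 : a (p.1 + 1) p.2 = a p.1 p.2 := (h.2.2.2.2.1 _ hp).1
  have e2 : a (p.1 + 1) (p.2 + 1) = a p.1 p.2 := (h.2.2.2.2.1 _ hp).2
  exact ⟨by omega, hr.2, by rw [e1, e2]⟩

lemma t00_fixed (hk : StrictMono k) (h : Is00Triangle n k a M)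
    (hnb : ∀ r j, ¬ BadAt n a r j) : M = ∅ ∧ IsMonotoneTriangle n k a := by
  have hM : M = ∅ := by
    rw [Finset.eq_empty_iff_forall_notMem]
    intro p hp
    exact hnb _ _ (t00_mem_bad h hp)
  subst hM
  exact ⟨rfl, h.1, h.2.1,
    fun i j h1 h2 => h.2.2.2.2.2 i j h1 h2 (Finset.notMem_empty _) (Finset.notMem_empty _),
    fun i j hj hjn => t00_row_strict hk h i (fun j' hb => hnb i j' hb) j hj hjn⟩

lemma mt_t00 (h : IsMonotoneTriangle n k a) : Is00Triangle n k a ∅ :=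
  ⟨h.1, h.2.1, fun p hp => absurd hp (Finset.notMem_empty _),
    fun p hp => absurd hp (Finset.notMem_empty _),
    fun p hp => absurd hp (Finset.notMem_empty _),
    fun i j h1 h2 _ _ => h.2.2.1 i j h1 h2⟩

lemma mt_nobad (h : IsMonotoneTriangle n k a) : ∀ r j, ¬ BadAt n a r j :=
  fun r j hb => absurd hb.2.2 (ne_of_lt (h.2.2.2 r j hb.1 hb.2.1))

lemma t00_key (h : Is00Triangle n k a M) (i j : ℕ) (hij : i + 1 ≤ j) (hjn : j + 2 ≤ n)
    (h1 : (i, j) ∉ M) (hbad : a (i + 1) j = a (i + 1) (j + 1))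
    (hstrict : ∀ j', i ≤ j' → j' + 2 ≤ n → a i j' < a i (j' + 1)) :
    a i j = a (i + 1) j ∧ (i, j - 1) ∉ M ∧ (i, j + 1) ∉ M := by
  obtain ⟨hz, hb, hrg, hadj, hsp, hin⟩ := h
  by_cases h2 : (i, j - 1) ∈ M
  · exfalso
    have hr2 := hrg _ h2
    have hi2 : i < j - 1 := hr2.1
    have hn2 : j - 1 + 2 ≤ n := hr2.2
    have e2 : a (i + 1) (j - 1 + 1) = a i (j - 1) := (hsp _ h2).2
    rw [show j - 1 + 1 = j by omega] at e2
    have s1 : a i (j - 1) < a i (j - 1 + 1) := hstrict (j - 1) (by omega) (by omega)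
    rw [show j - 1 + 1 = j by omega] at s1
    by_cases h3 : (i, j + 1) ∈ M
    · have e3 : a (i + 1) (j + 1) = a i (j + 1) := (hsp _ h3).1
      have s2 : a i j < a i (j + 1) := hstrict j (by omega) hjn
      linarith
    · have i6 := hin i (j + 1) (by omega) (by omega) h1 h3
      have i61 : a i j ≤ a (i + 1) (j + 1) := i6.1
      linarith
  · have i6 := hin i j hij (by omega) h2 h1
    by_cases h3 : (i, j + 1) ∈ M
    · exfalso
      have e3 : a (i + 1) (j + 1) = a i (j + 1) := (hsp _ h3).1
      have s2 : a i j < a i (j + 1) := hstrict j (by omega) hjn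
      linarith [i6.2]
    · have i6' := hin i (j + 1) (by omega) (by omega) h1 h3
      have i61 : a i j ≤ a (i + 1) (j + 1) := i6'.1
      exact ⟨le_antisymm (by linarith) i6.2, h2, h3⟩

lemma t00_erase (h : Is00Triangle n k a M) (i j : ℕ) (h1 : (i, j) ∈ M)
    (mono : ∀ j', i ≤ j' → j' + 2 ≤ n → a i j' ≤ a i (j' + 1)) :
    Is00Triangle n k a (M.erase (i, j)) := by
  obtain ⟨hz, hb, hrg, hadj, hsp, hin⟩ := h
  have hr := hrg _ h1
  have hlt : i < j := hr.1
  have hn2 : j + 2 ≤ n := hr.2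
  have e1 : a (i + 1) j = a i j := (hsp _ h1).1
  have e2 : a (i + 1) (j + 1) = a i j := (hsp _ h1).2
  refine ⟨hz, hb, fun p hp => hrg p (Finset.mem_of_mem_erase hp),
    fun p hp hq => hadj p (Finset.mem_of_mem_erase hp) (Finset.mem_of_mem_erase hq),
    fun p hp => hsp p (Finset.mem_of_mem_erase hp), ?_⟩
  intro u v huv hvn hm1 hm2
  by_cases c1 : (u, v - 1) ∈ M
  · have hpe : (u, v - 1) = (i, j) := by
      by_contra hne
      exact hm1 (Finset.mem_erase.mpr ⟨hne, c1⟩)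
    have hu : u = i := congrArg Prod.fst hpe
    have hv1 : v - 1 = j := congrArg Prod.snd hpe
    have hv : v = j + 1 := by omega
    rw [hu, hv]
    have m1 : a i j ≤ a i (j + 1) := mono j (by omega) hn2
    constructor
    · exact le_of_eq e2.symm
    · linarith [e2, m1]
  · by_cases c2 : (u, v) ∈ M
    · have hpe : (u, v) = (i, j) := by
        by_contra hne
        exact hm2 (Finset.mem_erase.mpr ⟨hne, c2⟩)
      have hu : u = i := congrArg Prod.fst hpe
      have hv : v = j := congrArg Prod.snd hpe
      rw [hu, hv]
      have m1 : a i (j - 1) ≤ a i (j - 1 + 1) := mono (j - 1) (by omega) (by omega)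
      rw [show j - 1 + 1 = j by omega] at m1
      exact ⟨by linarith [e1], le_of_eq e1⟩
    · exact hin u v huv hvn c1 c2

lemma t00_insert (h : Is00Triangle n k a M) (i j : ℕ) (hij : i + 1 ≤ j) (hjn : j + 2 ≤ n)
    (h1 : (i, j) ∉ M) (hbad : a (i + 1) j = a (i + 1) (j + 1))
    (hstrict : ∀ j', i ≤ j' → j' + 2 ≤ n → a i j' < a i (j' + 1)) :
    Is00Triangle n k a (insert (i, j) M) := by
  obtain ⟨hkey, hL, hR⟩ := t00_key h i j hij hjn h1 hbad hstrict
  obtain ⟨hz, hb, hrg, hadj, hsp, hin⟩ := h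
  refine ⟨hz, hb, ?_, ?_, ?_, ?_⟩
  · intro p hp
    rcases Finset.mem_insert.mp hp with rfl | hp'
    · exact ⟨by omega, hjn⟩
    · exact hrg p hp'
  · intro p hp
    rcases Finset.mem_insert.mp hp with rfl | hp'
    · intro hq
      rcases Finset.mem_insert.mp hq with he | hq'
      · have : j + 1 = j := congrArg Prod.snd he
        omega
      · exact hR hq'
    · intro hq
      rcases Finset.mem_insert.mp hq with he | hq'
      · have hp1 : p.1 = i := congrArg Prod.fst he
        have hp2 : p.2 + 1 = j := congrArg Prod.snd he
        have hpv : p = (i, j - 1) := by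
          rw [Prod.ext_iff]
          exact ⟨hp1, by omega⟩
        exact hL (hpv ▸ hp')
      · exact hadj p hp' hq'
  · intro p hp
    rcases Finset.mem_insert.mp hp with rfl | hp'
    · exact ⟨hkey.symm, hbad.symm.trans hkey.symm⟩
    · exact hsp p hp'
  · intro u v h1' h2' hm1 hm2
    exact hin u v h1' h2' (fun hc => hm1 (Finset.mem_insert_of_mem hc))
      (fun hc => hm2 (Finset.mem_insert_of_mem hc))

noncomputable def pickR (n : ℕ) (a : ℕ → ℕ → ℤ) : ℕ := sInf {r | ∃ j, BadAt n a r j}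

noncomputable def pickJ (n : ℕ) (a : ℕ → ℕ → ℤ) : ℕ := sInf {j | BadAt n a (pickR n a) j}

lemma t00_pick (hk : StrictMono k) (h : Is00Triangle n k a M)
    (hne : ∃ r j, BadAt n a r j) :
    1 ≤ pickR n a ∧ BadAt n a (pickR n a) (pickJ n a) ∧
      ∀ j', pickR n a - 1 ≤ j' → j' + 2 ≤ n →
        a (pickR n a - 1) j' < a (pickR n a - 1) (j' + 1) := by
  have hdef : pickR n a = sInf {r | ∃ j, BadAt n a r j} := rfl
  have hne1 : {r | ∃ j, BadAt n a r j}.Nonempty := by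
    obtain ⟨r, j, hb⟩ := hne; exact ⟨r, j, hb⟩
  have hmem : ∃ j, BadAt n a (pickR n a) j := Nat.sInf_mem hne1
  have hmemJ : BadAt n a (pickR n a) (pickJ n a) := Nat.sInf_mem hmem
  have h0 : ∀ j', ¬ BadAt n a 0 j' := by
    intro j' hb
    obtain ⟨hj1, hj2, he⟩ := hb
    have e1 : a 0 j' = k ⟨j', by omega⟩ := h.2.1 ⟨j', by omega⟩
    have e2 : a 0 (j' + 1) = k ⟨j' + 1, by omega⟩ := h.2.1 ⟨j' + 1, by omega⟩
    rw [e1, e2] at he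
    exact absurd he (ne_of_lt (hk (Fin.mk_lt_mk.mpr (by omega))))
  have hpos : 1 ≤ pickR n a := by
    rcases Nat.eq_zero_or_pos (pickR n a) with h0' | h0'
    · exfalso
      rw [h0'] at hmem
      obtain ⟨j', hb⟩ := hmem
      exact h0 j' hb
    · exact h0'
  refine ⟨hpos, hmemJ, ?_⟩
  apply t00_row_strict hk h
  intro j' hb
  exact Nat.notMem_of_lt_sInf (show pickR n a - 1 < sInf {r | ∃ j, BadAt n a r j} by omega)
    ⟨j', hb⟩

noncomputable def tog (n : ℕ) (x : (ℕ → ℕ → ℤ) × Finset (ℕ × ℕ)) :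
    (ℕ → ℕ → ℤ) × Finset (ℕ × ℕ) :=
  (x.1, if (pickR n x.1 - 1, pickJ n x.1) ∈ x.2
    then x.2.erase (pickR n x.1 - 1, pickJ n x.1)
    else insert (pickR n x.1 - 1, pickJ n x.1) x.2)

lemma tog_fst (n : ℕ) (x : (ℕ → ℕ → ℤ) × Finset (ℕ × ℕ)) : (tog n x).1 = x.1 := rfl

lemma tog_mem (n : ℕ) (x : (ℕ → ℕ → ℤ) × Finset (ℕ × ℕ))
    (h : (pickR n x.1 - 1, pickJ n x.1) ∈ x.2) :
    (tog n x).2 = x.2.erase (pickR n x.1 - 1, pickJ n x.1) := by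
  simp only [tog, if_pos h]

lemma tog_not_mem (n : ℕ) (x : (ℕ → ℕ → ℤ) × Finset (ℕ × ℕ))
    (h : (pickR n x.1 - 1, pickJ n x.1) ∉ x.2) :
    (tog n x).2 = insert (pickR n x.1 - 1, pickJ n x.1) x.2 := by
  simp only [tog, if_neg h]

lemma tog_tog (n : ℕ) (x : (ℕ → ℕ → ℤ) × Finset (ℕ × ℕ)) : tog n (tog n x) = x := by
  by_cases hm : (pickR n x.1 - 1, pickJ n x.1) ∈ x.2
  · have e1 := tog_mem n x hm
    have hnm : (pickR n x.1 - 1, pickJ n x.1) ∉ (tog n x).2 := by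
      rw [e1]; exact Finset.notMem_erase _ _
    have e2 := tog_not_mem n (tog n x) hnm
    rw [tog_fst] at e2
    refine Prod.ext rfl ?_
    rw [e2, e1, Finset.insert_erase hm]
  · have e1 := tog_not_mem n x hm
    have hnm : (pickR n x.1 - 1, pickJ n x.1) ∈ (tog n x).2 := by
      rw [e1]; exact Finset.mem_insert_self _ _
    have e2 := tog_mem n (tog n x) hnm
    rw [tog_fst] at e2
    refine Prod.ext rfl ?_
    rw [e2, e1, Finset.erase_insert hm]

noncomputable def emb (n : ℕ) (lo hi : ℤ) (hlh : lo ≤ hi)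
    (x : (ℕ → ℕ → ℤ) × Finset (ℕ × ℕ)) :
    (Fin n × Fin n → ↥(Set.Icc lo hi)) × (Fin n × Fin n → Bool) :=
  (fun p => ⟨max lo (min hi (x.1 (p.1 : ℕ) (p.2 : ℕ))),
      le_max_left _ _, max_le hlh (min_le_left _ _)⟩,
   fun p => decide (((p.1 : ℕ), (p.2 : ℕ)) ∈ x.2))

lemma emb_fst (n : ℕ) (lo hi : ℤ) (hlh : lo ≤ hi) (x : (ℕ → ℕ → ℤ) × Finset (ℕ × ℕ))
    (u v : ℕ) (hu : u < n) (hv : v < n) :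
    ((emb n lo hi hlh x).1 (⟨u, hu⟩, ⟨v, hv⟩) : ℤ) = max lo (min hi (x.1 u v)) := rfl

lemma emb_snd (n : ℕ) (lo hi : ℤ) (hlh : lo ≤ hi) (x : (ℕ → ℕ → ℤ) × Finset (ℕ × ℕ))
    (u v : ℕ) (hu : u < n) (hv : v < n) :
    (emb n lo hi hlh x).2 (⟨u, hu⟩, ⟨v, hv⟩) = decide ((u, v) ∈ x.2) := rfl

end Aux

/-- for k_1 < … < k_n, the signed sum over all {(0,0)}-triangles with bottom
row (k_1,…,k_n), weighted by (-1)^{#special entries}, equals the number of monotone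
triangles with bottom row (k_1,…,k_n). -/
theorem stmt_16 (n : ℕ) (hn : 1 ≤ n) (k : Fin n → ℤ) (hk : StrictMono k) :
    (∑ᶠ x : (ℕ → ℕ → ℤ) × Finset (ℕ × ℕ),
        (if Is00Triangle n k x.1 x.2 then (-1 : ℤ) ^ x.2.card else 0))
      = (Set.ncard {a : ℕ → ℕ → ℤ | IsMonotoneTriangle n k a} : ℤ) := by
  classical
  set lo := k ⟨0, hn⟩ with hlo
  set hi := k ⟨n - 1, by omega⟩ with hhi
  have hlohi : lo ≤ hi := hk.monotone (Fin.mk_le_mk.mpr (by omega))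
  set T : Set ((ℕ → ℕ → ℤ) × Finset (ℕ × ℕ)) := {x | Is00Triangle n k x.1 x.2} with hTdef
  haveI hIccFin : Finite ↥(Set.Icc lo hi) := Set.finite_coe_iff.mpr (Set.finite_Icc lo hi)
  haveI hTFinite : Finite ↥T := by
    apply Finite.of_injective (fun x : ↥T => emb n lo hi hlohi x.1)
    intro x y hxy
    have hx : Is00Triangle n k x.1.1 x.1.2 := x.2
    have hy : Is00Triangle n k y.1.1 y.1.2 := y.2
    have h1 := congrArg Prod.fst hxy
    have h2 := congrArg Prod.snd hxy
    apply Subtype.ext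
    apply Prod.ext
    · funext u v
      by_cases huv : u ≤ v ∧ v < n
      · have bx := t00_bound hn hk hx u v huv.1 (by omega)
        have by' := t00_bound hn hk hy u v huv.1 (by omega)
        have hval : max lo (min hi (x.1.1 u v)) = max lo (min hi (y.1.1 u v)) := by
          rw [← emb_fst n lo hi hlohi x.1 u v (by omega) (by omega),
            ← emb_fst n lo hi hlohi y.1 u v (by omega) (by omega), h1]
        rw [min_eq_right bx.2, max_eq_right bx.1, min_eq_right by'.2, max_eq_right by'.1] at hval
        exact hval
      · rw [hx.1 u v huv, hy.1 u v huv]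
    · ext p
      have key : ∀ hp1 : p.1 < n, ∀ hp2 : p.2 < n, ((p.1, p.2) ∈ x.1.2 ↔ (p.1, p.2) ∈ y.1.2) := by
        intro hp1 hp2
        apply decide_eq_decide.mp
        rw [← emb_snd n lo hi hlohi x.1 p.1 p.2 hp1 hp2,
          ← emb_snd n lo hi hlohi y.1 p.1 p.2 hp1 hp2, h2]
      constructor
      · intro hp
        have hr := hx.2.2.1 _ hp
        have : (p.1, p.2) ∈ y.1.2 :=
          (key (by omega) (by omega)).mp (by rw [Prod.mk.eta]; exact hp)
        rwa [Prod.mk.eta] at this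
      · intro hp
        have hr := hy.2.2.1 _ hp
        have : (p.1, p.2) ∈ x.1.2 :=
          (key (by omega) (by omega)).mpr (by rw [Prod.mk.eta]; exact hp)
        rwa [Prod.mk.eta] at this
  have hTfin : T.Finite := Set.finite_coe_iff.mp hTFinite
  set S : Set (ℕ → ℕ → ℤ) := {a | IsMonotoneTriangle n k a} with hSdef
  have hSFinite : Finite ↥S := by
    apply Finite.of_injective (fun a : ↥S => (⟨(a.1, ∅), mt_t00 a.2⟩ : ↥T))
    intro x y hxy
    apply Subtype.ext
    exact congrArg Prod.fst (Subtype.ext_iff.mp hxy)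
  have hSfin : S.Finite := Set.finite_coe_iff.mp hSFinite
  -- rewrite the finsum as a finite sum over hTfin.toFinset
  have hsupp : (Function.support fun x : (ℕ → ℕ → ℤ) × Finset (ℕ × ℕ) =>
      if Is00Triangle n k x.1 x.2 then (-1 : ℤ) ^ x.2.card else 0) ⊆ ↑hTfin.toFinset := by
    intro x hx
    simp only [Function.mem_support, ne_eq, ite_eq_right_iff, not_forall] at hx
    simp only [Finset.coe_sort_coe, Set.Finite.coe_toFinset]
    exact hx.1
  rw [finsum_eq_sum_of_support_subset _ hsupp]
  set P : ((ℕ → ℕ → ℤ) × Finset (ℕ × ℕ)) → Prop := fun x => ∀ r j, ¬ BadAt n x.1 r j with hPdef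
  rw [← Finset.sum_filter_add_sum_filter_not hTfin.toFinset P]
  have hmemT : ∀ x, x ∈ hTfin.toFinset ↔ Is00Triangle n k x.1 x.2 := by
    intro x; rw [Set.Finite.mem_toFinset]; exact Iff.rfl
  -- the non-fixed part sums to zero via the involution `tog n`
  have hzero : (∑ x ∈ hTfin.toFinset.filter (fun x => ¬ P x),
      if Is00Triangle n k x.1 x.2 then (-1 : ℤ) ^ x.2.card else 0) = 0 := by
    apply Finset.sum_involution (fun x _ => tog n x)
    · -- f x + f (tog x) = 0
      intro x hxmem
      obtain ⟨hxT, hnP⟩ := Finset.mem_filter.mp hxmem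
      have hx00 : Is00Triangle n k x.1 x.2 := (hmemT x).mp hxT
      have hne : ∃ r j, BadAt n x.1 r j := by
        by_contra hcon
        push_neg at hcon
        exact hnP (fun r j => hcon r j)
      obtain ⟨hpos, ⟨hij', hjn, hbad⟩, hstrict⟩ := t00_pick hk hx00 hne
      have hieq : pickR n x.1 - 1 + 1 = pickR n x.1 := by omega
      have hbad' : x.1 (pickR n x.1 - 1 + 1) (pickJ n x.1)
          = x.1 (pickR n x.1 - 1 + 1) (pickJ n x.1 + 1) := by rw [hieq]; exact hbad
      have hij : pickR n x.1 - 1 + 1 ≤ pickJ n x.1 := by omega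
      by_cases hm : (pickR n x.1 - 1, pickJ n x.1) ∈ x.2
      · have ht2 := tog_mem n x hm
        have h00' : Is00Triangle n k x.1 (tog n x).2 := by
          rw [ht2]
          exact t00_erase hx00 _ _ hm (t00_mono_row hk hx00 (pickR n x.1 - 1))
        rw [if_pos hx00, if_pos (show Is00Triangle n k (tog n x).1 (tog n x).2 from h00')]
        have hcpos : 0 < x.2.card := Finset.card_pos.mpr ⟨_, hm⟩
        obtain ⟨c, hc⟩ : ∃ c, x.2.card = c + 1 := ⟨x.2.card - 1, by omega⟩
        rw [ht2, Finset.card_erase_of_mem hm, hc, Nat.add_sub_cancel, pow_succ]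
        ring
      · have ht2 := tog_not_mem n x hm
        have h00' : Is00Triangle n k x.1 (tog n x).2 := by
          rw [ht2]
          exact t00_insert hx00 _ _ hij hjn hm hbad' hstrict
        rw [if_pos hx00, if_pos (show Is00Triangle n k (tog n x).1 (tog n x).2 from h00')]
        rw [ht2, Finset.card_insert_of_notMem hm, pow_succ]
        ring
    · -- tog x ≠ x when f x ≠ 0
      intro x hxmem _
      intro heq
      have h2 := congrArg Prod.snd heq
      by_cases hm : (pickR n x.1 - 1, pickJ n x.1) ∈ x.2
      · rw [tog_mem n x hm] at h2
        have := Finset.notMem_erase (pickR n x.1 - 1, pickJ n x.1) x.2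
        rw [h2] at this
        exact this hm
      · rw [tog_not_mem n x hm] at h2
        have := Finset.mem_insert_self (pickR n x.1 - 1, pickJ n x.1) x.2
        rw [h2] at this
        exact hm this
    · -- tog x ∈ filter
      intro x hxmem
      obtain ⟨hxT, hnP⟩ := Finset.mem_filter.mp hxmem
      have hx00 : Is00Triangle n k x.1 x.2 := (hmemT x).mp hxT
      have hne : ∃ r j, BadAt n x.1 r j := by
        by_contra hcon
        push_neg at hcon
        exact hnP (fun r j => hcon r j)
      obtain ⟨hpos, ⟨hij', hjn, hbad⟩, hstrict⟩ := t00_pick hk hx00 hne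
      have hieq : pickR n x.1 - 1 + 1 = pickR n x.1 := by omega
      have hbad' : x.1 (pickR n x.1 - 1 + 1) (pickJ n x.1)
          = x.1 (pickR n x.1 - 1 + 1) (pickJ n x.1 + 1) := by rw [hieq]; exact hbad
      have hij : pickR n x.1 - 1 + 1 ≤ pickJ n x.1 := by omega
      have h00' : Is00Triangle n k x.1 (tog n x).2 := by
        by_cases hm : (pickR n x.1 - 1, pickJ n x.1) ∈ x.2
        · rw [tog_mem n x hm]
          exact t00_erase hx00 _ _ hm (t00_mono_row hk hx00 (pickR n x.1 - 1))
        · rw [tog_not_mem n x hm]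
          exact t00_insert hx00 _ _ hij hjn hm hbad' hstrict
      apply Finset.mem_filter.mpr
      constructor
      · exact (hmemT (tog n x)).mpr h00'
      · exact hnP
    · -- involution
      intro x hxmem
      exact tog_tog n x
  rw [hzero, add_zero]
  -- the fixed part
  have hone : ∀ x ∈ hTfin.toFinset.filter P,
      (if Is00Triangle n k x.1 x.2 then (-1 : ℤ) ^ x.2.card else 0) = 1 := by
    intro x hxmem
    obtain ⟨hxT, hP⟩ := Finset.mem_filter.mp hxmem
    have hx00 : Is00Triangle n k x.1 x.2 := (hmemT x).mp hxT
    obtain ⟨hM, _⟩ := t00_fixed hk hx00 hP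
    rw [if_pos hx00, hM]
    simp
  rw [Finset.sum_congr rfl hone, Finset.sum_const, nsmul_eq_mul, mul_one]
  have hcard : (hTfin.toFinset.filter P).card = S.ncard := by
    rw [Set.ncard_eq_toFinset_card S hSfin]
    apply Finset.card_bij (fun x _ => x.1)
    · intro x hxmem
      obtain ⟨hxT, hP⟩ := Finset.mem_filter.mp hxmem
      have hx00 : Is00Triangle n k x.1 x.2 := (hmemT x).mp hxT
      rw [Set.Finite.mem_toFinset]
      exact (t00_fixed hk hx00 hP).2
    · intro x hxmem y hymem hxy
      obtain ⟨hxT, hPx⟩ := Finset.mem_filter.mp hxmem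
      obtain ⟨hyT, hPy⟩ := Finset.mem_filter.mp hymem
      have hx00 : Is00Triangle n k x.1 x.2 := (hmemT x).mp hxT
      have hy00 : Is00Triangle n k y.1 y.2 := (hmemT y).mp hyT
      have hMx := (t00_fixed hk hx00 hPx).1
      have hMy := (t00_fixed hk hy00 hPy).1
      exact Prod.ext hxy (hMx.trans hMy.symm)
    · intro b hb
      rw [Set.Finite.mem_toFinset] at hb
      refine ⟨(b, ∅), ?_, rfl⟩
      apply Finset.mem_filter.mpr
      constructor
      · exact (hmemT (b, ∅)).mpr (mt_t00 hb)
      · exact fun r j => mt_nobad hb r j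
  rw [hcard]
end
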